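/- Let n ≥ 2. Every multiplier σ of G(n) is similar to σ_λ for some family λ = (λ_{i,jk}) of elements of 𝕋 indexed by 1 ≤ i ≤ k and 1 ≤ j < k ≤ n; that is, there exist such λ and a map β : G(n) → 𝕋 with σ_λ(r,s) = β(r)β(s)β(rs)⁻¹σ(r,s) for all r, s ∈ G(n). -/

import Mathlib

open scoped BigOperators

namespace FreeNilp

open scoped commutatorElement

/-- Index set for pairs `(j,k)` with `j < k`. -/
abbrev PairIdx (n : ℕ) : Type := {p : Fin n × Fin n // p.1 < p.2}

/-- The free nilpotent group of class 2 and rank `n`, realized on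
`ℤ^n × ℤ^{n(n-1)/2}`. -/
@[ext] structure G (n : ℕ) where
  u : Fin n → ℤ
  v : PairIdx n → ℤ

namespace G

instance (n : ℕ) : Group (G n) where
  mul r s := ⟨fun i => r.u i + s.u i, fun p => r.v p + s.v p + r.u p.1.1 * s.u p.1.2⟩
  one := ⟨fun _ => 0, fun _ => 0⟩
  inv r := ⟨fun i => -r.u i, fun p => -r.v p + r.u p.1.1 * r.u p.1.2⟩
  mul_assoc r s t := by
    refine G.ext ?_ ?_ <;> funext x
    · show (r.u x + s.u x) + t.u x = r.u x + (s.u x + t.u x)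
      ring
    · show (r.v x + s.v x + r.u x.1.1 * s.u x.1.2) + t.v x +
          (r.u x.1.1 + s.u x.1.1) * t.u x.1.2 =
        r.v x + (s.v x + t.v x + s.u x.1.1 * t.u x.1.2) +
          r.u x.1.1 * (s.u x.1.2 + t.u x.1.2)
      ring
  one_mul r := by
    refine G.ext ?_ ?_ <;> funext x
    · show 0 + r.u x = r.u x
      ring
    · show 0 + r.v x + 0 * r.u x.1.2 = r.v x
      ring
  mul_one r := by
    refine G.ext ?_ ?_ <;> funext x
    · show r.u x + 0 = r.u x
      ring
    · show r.v x + 0 + r.u x.1.1 * 0 = r.v x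
      ring
  inv_mul_cancel r := by
    refine G.ext ?_ ?_ <;> funext x
    · show -r.u x + r.u x = 0
      ring
    · show (-r.v x + r.u x.1.1 * r.u x.1.2) + r.v x + -r.u x.1.1 * r.u x.1.2 = 0
      ring

@[simp] lemma mul_u {n : ℕ} (r s : G n) (i : Fin n) : (r * s).u i = r.u i + s.u i := rfl
@[simp] lemma mul_v {n : ℕ} (r s : G n) (p : PairIdx n) :
    (r * s).v p = r.v p + s.v p + r.u p.1.1 * s.u p.1.2 := rfl
@[simp] lemma one_u {n : ℕ} (i : Fin n) : (1 : G n).u i = 0 := rfl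
@[simp] lemma one_v {n : ℕ} (p : PairIdx n) : (1 : G n).v p = 0 := rfl
@[simp] lemma inv_u {n : ℕ} (r : G n) (i : Fin n) : (r⁻¹).u i = -r.u i := rfl
@[simp] lemma inv_v {n : ℕ} (r : G n) (p : PairIdx n) :
    (r⁻¹).v p = -r.v p + r.u p.1.1 * r.u p.1.2 := rfl

end G

/-- First-block coordinate `r_i`. -/
def uc {n : ℕ} (r : G n) (i : Fin n) : ℤ := r.u i

/-- Second-block coordinate `r_{jk}` (zero unless `j < k`). -/
def vc {n : ℕ} (r : G n) (j k : Fin n) : ℤ := if h : j < k then r.v ⟨(j, k), h⟩ else 0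

/-- A multiplier (2-cocycle with values in the circle group) of a group. -/
def IsMultiplier {Γ : Type*} [Group Γ] (σ : Γ → Γ → Circle) : Prop :=
  (∀ r s t : Γ, σ r s * σ (r * s) t = σ r (s * t) * σ s t) ∧
  ∀ r : Γ, σ r 1 = 1 ∧ σ 1 r = 1

/-- Similarity (cohomology) of multipliers. -/
def Similar {Γ : Type*} [Group Γ] (σ τ : Γ → Γ → Circle) : Prop :=
  ∃ β : Γ → Circle, ∀ r s : Γ, τ r s = β r * β s * (β (r * s))⁻¹ * σ r s

/-- The subgroup `H(n) ≅ ℤⁿ` of `G n`: only the coordinates `r_n` and `r_{jn}` may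
be nonzero. -/
def Hsub (n : ℕ) : Subgroup (G n) where
  carrier := {r | (∀ i : Fin n, (i : ℕ) + 1 < n → r.u i = 0) ∧
                  ∀ p : PairIdx n, (p.1.2 : ℕ) + 1 < n → r.v p = 0}
  one_mem' := ⟨fun _ _ => rfl, fun _ _ => rfl⟩
  mul_mem' := by
    rintro r s ⟨hr1, hr2⟩ ⟨hs1, hs2⟩
    refine ⟨fun i hi => ?_, fun p hp => ?_⟩
    · simp [hr1 i hi, hs1 i hi]
    · simp [hr2 p hp, hs2 p hp, hs1 p.1.2 hp]
  inv_mem' := by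
    rintro r ⟨hr1, hr2⟩
    refine ⟨fun i hi => ?_, fun p hp => ?_⟩
    · simp [hr1 i hi]
    · simp [hr2 p hp, hr1 p.1.2 hp]

/-- The subgroup `G(n-1)` of `G n`: the coordinates `r_n` and `r_{jn}` vanish. -/
def Gsub (n : ℕ) : Subgroup (G n) where
  carrier := {r | (∀ i : Fin n, (i : ℕ) + 1 = n → r.u i = 0) ∧
                  ∀ p : PairIdx n, (p.1.2 : ℕ) + 1 = n → r.v p = 0}
  one_mem' := ⟨fun _ _ => rfl, fun _ _ => rfl⟩
  mul_mem' := by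
    rintro r s ⟨hr1, hr2⟩ ⟨hs1, hs2⟩
    refine ⟨fun i hi => ?_, fun p hp => ?_⟩
    · simp [hr1 i hi, hs1 i hi]
    · simp [hr2 p hp, hs2 p hp, hs1 p.1.2 hp]
  inv_mem' := by
    rintro r ⟨hr1, hr2⟩
    refine ⟨fun i hi => ?_, fun p hp => ?_⟩
    · simp [hr1 i hi]
    · simp [hr2 p hp, hr1 p.1.2 hp]

lemma mem_Hsub_iff {n : ℕ} {r : G n} :
    r ∈ Hsub n ↔ (∀ i : Fin n, (i : ℕ) + 1 < n → r.u i = 0) ∧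
      ∀ p : PairIdx n, (p.1.2 : ℕ) + 1 < n → r.v p = 0 := Iff.rfl

lemma mem_Gsub_iff {n : ℕ} {r : G n} :
    r ∈ Gsub n ↔ (∀ i : Fin n, (i : ℕ) + 1 = n → r.u i = 0) ∧
      ∀ p : PairIdx n, (p.1.2 : ℕ) + 1 = n → r.v p = 0 := Iff.rfl

/-- `H(n)` is a normal subgroup; conjugation preserves it. -/
lemma conj_mem_Hsub {n : ℕ} (s : G n) {a : G n} (ha : a ∈ Hsub n) :
    s * a * s⁻¹ ∈ Hsub n := by
  obtain ⟨ha1, ha2⟩ := ha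
  refine ⟨fun i hi => ?_, fun p hp => ?_⟩
  · simp [ha1 i hi]
  · have hj : (p.1.1 : ℕ) + 1 < n := by
      have h2 : (p.1.1 : ℕ) < (p.1.2 : ℕ) := p.2
      omega
    simp [ha2 p hp, ha1 p.1.2 hp, ha1 p.1.1 hj]

/-- The action `α_b(a) = b a b⁻¹` of `G(n-1)` on `H(n)`. -/
def conjH {n : ℕ} (b : Gsub n) (a : Hsub n) : Hsub n :=
  ⟨(b : G n) * (a : G n) * (b : G n)⁻¹, conj_mem_Hsub _ a.2⟩

/-- The `H(n)`-part of the unique factorization `r = a·b`, `a ∈ H(n)`, `b ∈ G(n-1)`. -/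
def hpart {n : ℕ} (r : G n) : Hsub n :=
  ⟨⟨fun i => if (i : ℕ) + 1 = n then r.u i else 0,
    fun p => if (p.1.2 : ℕ) + 1 = n then r.v p else 0⟩, by
    refine ⟨fun i hi => ?_, fun p hp => ?_⟩
    · exact if_neg (by omega)
    · exact if_neg (by omega)⟩

/-- The `G(n-1)`-part of the unique factorization `r = a·b`. -/
def gpart {n : ℕ} (r : G n) : Gsub n :=
  ⟨⟨fun i => if (i : ℕ) + 1 = n then 0 else r.u i,
    fun p => if (p.1.2 : ℕ) + 1 = n then 0 else r.v p⟩, by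
    refine ⟨fun i hi => ?_, fun p hp => ?_⟩
    · exact if_pos hi
    · exact if_pos hp⟩

/-- `r` indeed factors as `hpart r * gpart r`. -/
lemma hpart_mul_gpart {n : ℕ} (r : G n) : ((hpart r : G n)) * (gpart r : G n) = r := by
  refine G.ext ?_ ?_ <;> funext x
  · show (if ((x : ℕ)) + 1 = n then r.u x else 0) + (if (x : ℕ) + 1 = n then 0 else r.u x) = r.u x
    split <;> ring
  · show (if ((x.1.2 : ℕ)) + 1 = n then r.v x else 0) +
      (if (x.1.2 : ℕ) + 1 = n then 0 else r.v x) +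
      (if ((x.1.1 : ℕ)) + 1 = n then r.u x.1.1 else 0) *
        (if (x.1.2 : ℕ) + 1 = n then 0 else r.u x.1.2) = r.v x
    have h2 : (x.1.1 : ℕ) < (x.1.2 : ℕ) := x.2
    have h3 : (x.1.2 : ℕ) < n := x.1.2.isLt
    rcases eq_or_ne ((x.1.2 : ℕ) + 1) n with h | h
    · rw [if_pos h, if_pos h, if_pos h, if_neg (by omega)]; ring
    · rw [if_neg h, if_neg h, if_neg h, if_neg (show ¬((x.1.1 : ℕ) + 1 = n) by omega)]
      ring

/-- An admissible pair `(σ_H, g)` (Mackey data with trivial multiplier on `G(n-1)`). -/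
structure AdmissiblePair (n : ℕ) (σH : Hsub n → Hsub n → Circle)
    (g : Hsub n → Gsub n → Circle) : Prop where
  multH : IsMultiplier σH
  g_one_right : ∀ a : Hsub n, g a 1 = 1
  g_one_left : ∀ b : Gsub n, g 1 b = 1
  g_add : ∀ (a a' : Hsub n) (b : Gsub n),
    g (a * a') b = σH (conjH b a) (conjH b a') * (σH a a')⁻¹ * (g a b * g a' b)
  g_mul : ∀ (a : Hsub n) (b b' : Gsub n), g a (b * b') = g (conjH b' a) b * g a b'

/-- An admissible triple `(σ_H, g, σ')`. -/
def AdmissibleTriple (n : ℕ) (σH : Hsub n → Hsub n → Circle)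
    (g : Hsub n → Gsub n → Circle) (σ' : Gsub n → Gsub n → Circle) : Prop :=
  AdmissiblePair n σH g ∧ IsMultiplier σ'

/-- The map `σ_n(a′b, ab′) = σ_H(a′, α_b(a)) g(a,b) σ′(b,b′)` defined via the unique
factorizations. -/
noncomputable def sigmaN {n : ℕ} (σH : Hsub n → Hsub n → Circle) (g : Hsub n → Gsub n → Circle)
    (σ' : Gsub n → Gsub n → Circle) (r s : G n) : Circle :=
  σH (hpart r) (conjH (gpart r) (hpart s)) * g (hpart s) (gpart r) *
    σ' (gpart r) (gpart s)

/-- The map `τ(a′b, ab′) = σ_H(a′, α_b(a)) g(a,b)` defined via the unique factorizations. -/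
noncomputable def tauN {n : ℕ} (σH : Hsub n → Hsub n → Circle) (g : Hsub n → Gsub n → Circle)
    (r s : G n) : Circle :=
  σH (hpart r) (conjH (gpart r) (hpart s)) * g (hpart s) (gpart r)

/-- The generator `u_i`. -/
def uE {n : ℕ} (i : Fin n) : G n := ⟨fun j => if j = i then 1 else 0, fun _ => 0⟩

/-- The generator `v_{jk}`. -/
def vE {n : ℕ} (j k : Fin n) : G n := ⟨fun _ => 0, fun p => if p.1 = (j, k) then 1 else 0⟩

/-- The last index `n` (i.e. `n-1` in `Fin n`). -/
def lastI (n : ℕ) (hn : 0 < n) : Fin n := ⟨n - 1, by omega⟩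

/-- `u_n` as an element of `H(n)`. -/
def unH {n : ℕ} (hn : 0 < n) : Hsub n :=
  ⟨uE (lastI n hn), by
    refine ⟨fun i hi => ?_, fun p hp => rfl⟩
    have h : i ≠ lastI n hn := by
      intro h; apply absurd hi; rw [h]; show ¬ (n - 1) + 1 < n; omega
    simp [uE, h]⟩

/-- `u_i` (for `i < n`) as an element of `G(n-1)`. -/
def uiG {n : ℕ} (i : Fin n) (hi : (i : ℕ) + 1 < n) : Gsub n :=
  ⟨uE i, by
    refine ⟨fun j hj => ?_, fun p hp => rfl⟩
    have h : j ≠ i := by intro h; rw [h] at hj; omega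
    simp [uE, h]⟩

/-- `v_{in}` (for `i < n`) as an element of `H(n)`. -/
def vinH {n : ℕ} (i : Fin n) (hi : (i : ℕ) + 1 < n) : Hsub n :=
  ⟨vE i (lastI n (by omega)), by
    refine ⟨fun j hj => rfl, fun p hp => ?_⟩
    have h : p.1 ≠ (i, lastI n (by omega)) := by
      intro h
      have h2 : (p.1.2 : ℕ) = n - 1 := by rw [h]; rfl
      omega
    simp [vE, h]⟩

/-- `v_{ij}` (for `j < n`) as an element of `G(n-1)`. -/
def vijG {n : ℕ} (i j : Fin n) (hj : (j : ℕ) + 1 < n) : Gsub n :=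
  ⟨vE i j, by
    refine ⟨fun k hk => rfl, fun p hp => ?_⟩
    have h : p.1 ≠ (i, j) := by
      intro h
      have h2 : (p.1.2 : ℕ) = (j : ℕ) := by rw [h]
      omega
    simp [vE, h]⟩

/-- The "word part" `w(a)` of `a ∈ H(n)`. -/
def wH {n : ℕ} (a : Hsub n) : Hsub n :=
  ⟨⟨(a : G n).u, fun _ => 0⟩,
    ⟨fun i hi => (mem_Hsub_iff.mp a.2).1 i hi, fun _ _ => rfl⟩⟩

/-- The "central part" `z(a)` of `a ∈ H(n)`. -/
def zH {n : ℕ} (a : Hsub n) : Hsub n :=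
  ⟨⟨fun _ => 0, (a : G n).v⟩,
    ⟨fun _ _ => rfl, fun p hp => (mem_Hsub_iff.mp a.2).2 p hp⟩⟩

/-- The "word part" `w(b)` of `b ∈ G(n-1)`. -/
def wG {n : ℕ} (b : Gsub n) : Gsub n :=
  ⟨⟨(b : G n).u, fun _ => 0⟩,
    ⟨fun i hi => (mem_Gsub_iff.mp b.2).1 i hi, fun _ _ => rfl⟩⟩

/-- The "central part" `z(b)` of `b ∈ G(n-1)`. -/
def zG {n : ℕ} (b : Gsub n) : Gsub n :=
  ⟨⟨fun _ => 0, (b : G n).v⟩,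
    ⟨fun _ _ => rfl, fun p hp => (mem_Gsub_iff.mp b.2).2 p hp⟩⟩

/-- `g(v_{in}, u_j)`, as a total function (equal to `1` outside the admissible range). -/
noncomputable def gvu {n : ℕ} (g : Hsub n → Gsub n → Circle) (i j : Fin n) : Circle :=
  if h : (i : ℕ) + 1 < n ∧ (j : ℕ) + 1 < n then g (vinH i h.1) (uiG j h.2) else 1

/-- `g(u_n, v_{ij})`, as a total function (equal to `1` outside the admissible range). -/
noncomputable def guv {n : ℕ} (g : Hsub n → Gsub n → Circle) (i j : Fin n) : Circle :=
  if h : (j : ℕ) + 1 < n then g (unH (by omega)) (vijG i j h) else 1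

/-- A normalized pair `(σ_H, g)`: admissible, with `σ_H` of the standard `λ`-form, and
`g(u_n, u_i) = 1` for all `1 ≤ i ≤ n-1`. -/
def Normalized {n : ℕ} (hn : 0 < n) (σH : Hsub n → Hsub n → Circle)
    (g : Hsub n → Gsub n → Circle) (lam : Fin n → Circle) : Prop :=
  AdmissiblePair n σH g ∧
  (∀ a' a : Hsub n, σH a' a =
    ∏ i ∈ Finset.univ.filter (fun i : Fin n => (i : ℕ) + 1 < n),
      lam i ^ (uc (a' : G n) (lastI n hn) * vc (a : G n) i (lastI n hn))) ∧
  ∀ (i : Fin n) (hi : (i : ℕ) + 1 < n), g (unH hn) (uiG i hi) = 1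

/-- The multiplier `σ_λ` of `G n` attached to a family of parameters
`λ_{i,jk} ∈ 𝕋` (`1 ≤ i ≤ k`, `1 ≤ j < k ≤ n`). -/
noncomputable def sigmaLam {n : ℕ} (lam : Fin n → Fin n → Fin n → Circle) (r s : G n) : Circle :=
  (∏ t ∈ Finset.univ.filter
      (fun t : Fin n × Fin n × Fin n => t.1 < t.2.1 ∧ t.2.1 < t.2.2),
    lam t.1 t.2.1 t.2.2 ^ (vc s t.2.1 t.2.2 * uc r t.1 + uc s t.2.2 * vc r t.1 t.2.1) *
    lam t.2.1 t.1 t.2.2 ^ (vc s t.1 t.2.2 * uc r t.2.1 +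
      uc s t.2.2 * (uc r t.1 * uc r t.2.1 - vc r t.1 t.2.1))) *
  ∏ p ∈ Finset.univ.filter (fun p : Fin n × Fin n => p.1 < p.2),
    lam p.1 p.1 p.2 ^ (vc s p.1 p.2 * uc r p.1 +
      uc s p.2 * (uc r p.1 * (uc r p.1 - 1) / 2)) *
    lam p.2 p.1 p.2 ^ (uc r p.2 * (vc s p.1 p.2 + uc r p.1 * uc s p.2) +
      uc r p.1 * (uc s p.2 * (uc s p.2 - 1) / 2))

/-- The extension of the parameter family to indices `i > k`, via
`λ_{k,ij} = λ_{i,jk}⁻¹ λ_{j,ik}` for `i < j < k`. -/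
noncomputable def lamExt {n : ℕ} (lam : Fin n → Fin n → Fin n → Circle) (i j k : Fin n) : Circle :=
  if i ≤ k then lam i j k else (lam j k i)⁻¹ * lam k j i

/-! ### Auxiliary: integer halving lemmas -/

lemma two_dvd_mul_pred (x : ℤ) : 2 ∣ x * (x - 1) := by
  have h := (Int.even_mul_succ_self (x - 1)).two_dvd
  have hx : (x - 1) * (x - 1 + 1) = x * (x - 1) := by ring
  rwa [hx] at h

lemma half_mul (x : ℤ) : 2 * (x * (x - 1) / 2) = x * (x - 1) :=
  Int.mul_ediv_cancel' (two_dvd_mul_pred x)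

lemma half_add (x y : ℤ) :
    (x + y) * (x + y - 1) / 2 = x * (x - 1) / 2 + y * (y - 1) / 2 + x * y := by
  have h1 := half_mul (x + y); have h2 := half_mul x; have h3 := half_mul y
  have key : 2 * ((x + y) * (x + y - 1) / 2) =
      2 * (x * (x - 1) / 2 + y * (y - 1) / 2 + x * y) := by
    linear_combination h1 - h2 - h3
  omega

lemma half_succ (x : ℤ) : (x + 1) * (x + 1 - 1) / 2 = x * (x - 1) / 2 + x := by
  have h1 := half_mul (x + 1); have h2 := half_mul x
  have key : 2 * ((x + 1) * (x + 1 - 1) / 2) = 2 * (x * (x - 1) / 2 + x) := by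
    linear_combination h1 - h2
  omega

lemma half_pred (x : ℤ) : (x - 1) * (x - 1 - 1) / 2 = x * (x - 1) / 2 - (x - 1) := by
  have h1 := half_mul (x - 1); have h2 := half_mul x
  have key : 2 * ((x - 1) * (x - 1 - 1) / 2) = 2 * (x * (x - 1) / 2 - (x - 1)) := by
    linear_combination h1 - h2
  omega

/-! ### Coordinates -/

section Coord
variable {n : ℕ}

lemma uc_mul (r s : G n) (i : Fin n) : uc (r * s) i = uc r i + uc s i := rfl
lemma uc_one (i : Fin n) : uc (1 : G n) i = 0 := rfl

lemma vc_of_not_lt (r : G n) {j k : Fin n} (h : ¬ j < k) : vc r j k = 0 := dif_neg h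

lemma vc_pos (r : G n) {j k : Fin n} (h : j < k) : vc r j k = r.v ⟨(j, k), h⟩ := dif_pos h

lemma vc_mul (r s : G n) {j k : Fin n} (h : j < k) :
    vc (r * s) j k = vc r j k + vc s j k + uc r j * uc s k := by
  rw [vc_pos _ h, vc_pos _ h, vc_pos _ h]; rfl

lemma vc_one (j k : Fin n) : vc (1 : G n) j k = 0 := by
  unfold vc; split <;> rfl

lemma central_of_u_eq_zero {x : G n} (hx : ∀ i, x.u i = 0) (y : G n) : x * y = y * x := by
  refine G.ext ?_ ?_ <;> funext t
  · show x.u t + y.u t = y.u t + x.u t; ring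
  · show x.v t + y.v t + x.u t.1.1 * y.u t.1.2 = y.v t + x.v t + y.u t.1.1 * x.u t.1.2
    rw [hx, hx]; ring

lemma commutator_u_eq_zero (x y : G n) (i : Fin n) : (⁅x, y⁆ : G n).u i = 0 := by
  rw [commutatorElement_def]; simp

lemma uE_zpow (m : Fin n) (c : ℤ) :
    (uE m : G n) ^ c = ⟨fun i => if i = m then c else 0, fun _ => 0⟩ := by
  induction c using Int.induction_on with
  | zero => refine G.ext ?_ ?_ <;> funext t <;> simp [uE]
  | succ i ih =>
    rw [zpow_add_one, ih]
    refine G.ext ?_ ?_ <;> funext t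
    · show (if t = m then (i : ℤ) else 0) + (if t = m then 1 else 0) = _
      split_ifs with hc <;> simp [hc]
    · show 0 + (0:ℤ) + (if t.1.1 = m then (i:ℤ) else 0) * (if t.1.2 = m then 1 else 0) = 0
      have ht := t.2
      split_ifs with h1 h2
      · exact absurd (h1 ▸ h2 ▸ ht) (lt_irrefl _)
      all_goals ring
  | pred i ih =>
    rw [zpow_sub_one, ih]
    refine G.ext ?_ ?_ <;> funext t
    · show (if t = m then (-i : ℤ) else 0) + -(if t = m then 1 else 0) = _
      split_ifs with hc <;> simp [hc] <;> ring
    · show 0 + (-0 + (if t.1.1 = m then (1:ℤ) else 0) * (if t.1.2 = m then 1 else 0)) +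
        (if t.1.1 = m then (-i:ℤ) else 0) * -(if t.1.2 = m then 1 else 0) = 0
      have ht := t.2
      split_ifs with h1 h2
      · exact absurd (h1 ▸ h2 ▸ ht) (lt_irrefl _)
      all_goals ring

lemma vE_zpow (p q : Fin n) (w : ℤ) :
    (vE p q : G n) ^ w = ⟨fun _ => 0, fun t => if t.1 = (p, q) then w else 0⟩ := by
  induction w using Int.induction_on with
  | zero => refine G.ext ?_ ?_ <;> funext t <;> simp [vE]
  | succ i ih =>
    rw [zpow_add_one, ih]
    refine G.ext ?_ ?_ <;> funext t
    · show (0:ℤ) + 0 = 0; ring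
    · show (if t.1 = (p,q) then (i:ℤ) else 0) + (if t.1 = (p,q) then 1 else 0) + 0 * 0 = _
      split_ifs with hc <;> simp [hc]
  | pred i ih =>
    rw [zpow_sub_one, ih]
    refine G.ext ?_ ?_ <;> funext t
    · show (0:ℤ) + -0 = 0; ring
    · show (if t.1 = (p,q) then (-i:ℤ) else 0) +
        (-(if t.1 = (p,q) then (1:ℤ) else 0) + 0 * 0) + 0 * -0 = _
      split_ifs with hc <;> simp [hc] <;> ring

lemma uc_uE_zpow (m : Fin n) (c : ℤ) (i : Fin n) :
    uc ((uE m : G n) ^ c) i = if i = m then c else 0 := by rw [uE_zpow]; rfl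

lemma vc_uE_zpow (m : Fin n) (c : ℤ) (j k : Fin n) : vc ((uE m : G n) ^ c) j k = 0 := by
  rw [uE_zpow]; unfold vc; split <;> rfl

lemma uc_vE_zpow (p q : Fin n) (w : ℤ) (i : Fin n) : uc ((vE p q : G n) ^ w) i = 0 := by
  rw [vE_zpow]; rfl

lemma vc_vE_zpow (p q : Fin n) (w : ℤ) {j k : Fin n} (h : j < k) :
    vc ((vE p q : G n) ^ w) j k = if (j, k) = (p, q) then w else 0 := by
  rw [vE_zpow, vc_pos _ h]

lemma uE_commutator {j k : Fin n} (h : j < k) : ⁅(uE j : G n), uE k⁆ = vE j k := by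
  rw [commutatorElement_def]
  refine G.ext ?_ ?_ <;> funext t
  · simp [uE, vE]
  · rcases t with ⟨⟨a, b⟩, hab⟩
    have hab' : (a : ℕ) < b := hab
    have h' : (j : ℕ) < k := h
    simp only [uE, vE, G.inv_v, G.inv_u, G.mul_u, G.mul_v, Prod.mk.injEq, Fin.ext_iff]
    split_ifs <;> omega

end Coord
/-! ### The central extension -/

section ExtGroup
variable {n : ℕ}

/-- Typeclass carrying the multiplier hypothesis. -/
class MulT (σ : G n → G n → Circle) : Prop where
  isMult : IsMultiplier σ

/-- The central extension `Circle ×_σ G n`. -/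
@[ext] structure Ext (σ : G n → G n → Circle) : Type where
  c : Circle
  g : G n

variable (σ : G n → G n → Circle) [MulT σ]

lemma sig_cocycle (r s t : G n) : σ r s * σ (r * s) t = σ r (s * t) * σ s t :=
  MulT.isMult.1 r s t
lemma sig_one_right (r : G n) : σ r 1 = 1 := (MulT.isMult.2 r).1
lemma sig_one_left (r : G n) : σ 1 r = 1 := (MulT.isMult.2 r).2

lemma sig_inv_comm (g : G n) : σ g⁻¹ g = σ g g⁻¹ := by
  have h := sig_cocycle σ g g⁻¹ g
  rw [mul_inv_cancel, inv_mul_cancel, sig_one_left σ, sig_one_right σ, mul_one, one_mul] at h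
  exact h.symm

noncomputable instance : Group (Ext σ) where
  mul x y := ⟨x.c * y.c * σ x.g y.g, x.g * y.g⟩
  one := ⟨1, 1⟩
  inv x := ⟨(x.c * σ x.g x.g⁻¹)⁻¹, x.g⁻¹⟩
  mul_assoc x y z := by
    refine Ext.ext ?_ ?_
    · show x.c * y.c * σ x.g y.g * z.c * σ (x.g * y.g) z.g
          = x.c * (y.c * z.c * σ y.g z.g) * σ x.g (y.g * z.g)
      have h := sig_cocycle σ x.g y.g z.g
      calc x.c * y.c * σ x.g y.g * z.c * σ (x.g * y.g) z.g
          = (σ x.g y.g * σ (x.g * y.g) z.g) * (x.c * y.c * z.c) := by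
            simp only [mul_comm, mul_left_comm, mul_assoc]
        _ = (σ x.g (y.g * z.g) * σ y.g z.g) * (x.c * y.c * z.c) := by rw [h]
        _ = x.c * (y.c * z.c * σ y.g z.g) * σ x.g (y.g * z.g) := by
            simp only [mul_comm, mul_left_comm, mul_assoc]
    · show x.g * y.g * z.g = x.g * (y.g * z.g); rw [mul_assoc]
  one_mul x := by
    refine Ext.ext ?_ ?_
    · show 1 * x.c * σ 1 x.g = x.c; rw [sig_one_left σ, one_mul, mul_one]
    · show 1 * x.g = x.g; rw [one_mul]
  mul_one x := by
    refine Ext.ext ?_ ?_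
    · show x.c * 1 * σ x.g 1 = x.c; rw [sig_one_right σ, mul_one, mul_one]
    · show x.g * 1 = x.g; rw [mul_one]
  inv_mul_cancel x := by
    refine Ext.ext ?_ ?_
    · show (x.c * σ x.g x.g⁻¹)⁻¹ * x.c * σ x.g⁻¹ x.g = 1
      rw [sig_inv_comm σ, mul_inv_rev]
      calc (σ x.g x.g⁻¹)⁻¹ * x.c⁻¹ * x.c * σ x.g x.g⁻¹
          = (x.c⁻¹ * x.c) * ((σ x.g x.g⁻¹)⁻¹ * σ x.g x.g⁻¹) := by
            simp only [mul_comm, mul_left_comm, mul_assoc]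
        _ = 1 := by rw [inv_mul_cancel, inv_mul_cancel, mul_one]
    · show x.g⁻¹ * x.g = 1; rw [inv_mul_cancel]

lemma emul_c (x y : Ext σ) : (x * y).c = x.c * y.c * σ x.g y.g := rfl
lemma emul_g (x y : Ext σ) : (x * y).g = x.g * y.g := rfl
lemma eone_c : (1 : Ext σ).c = 1 := rfl
lemma eone_g : (1 : Ext σ).g = 1 := rfl

/-- The projection homomorphism. -/
def eproj : Ext σ →* G n where
  toFun := Ext.g
  map_one' := rfl
  map_mul' _ _ := rfl

lemma eg_zpow (x : Ext σ) (m : ℤ) : (x ^ m).g = x.g ^ m := map_zpow (eproj σ) x m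

/-- The central inclusion of the circle. -/
noncomputable def ec : Circle →* Ext σ where
  toFun a := ⟨a, 1⟩
  map_one' := rfl
  map_mul' a b := by
    refine (Ext.ext ?_ ?_).symm
    · show a * b * σ 1 1 = a * b; rw [sig_one_left σ, mul_one]
    · show (1 : G n) * 1 = 1; rw [one_mul]

lemma ec_c (a : Circle) : (ec σ a).c = a := rfl
lemma ec_g (a : Circle) : (ec σ a).g = 1 := rfl
lemma ec_zpow (a : Circle) (m : ℤ) : (ec σ a) ^ m = ec σ (a ^ m) := (map_zpow (ec σ) a m).symm
lemma ec_one : ec σ 1 = 1 := map_one _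
lemma ec_mul_ec (a b : Circle) : ec σ a * ec σ b = ec σ (a * b) := (map_mul _ _ _).symm

lemma ec_comm (a : Circle) (x : Ext σ) : ec σ a * x = x * ec σ a := by
  refine Ext.ext ?_ ?_
  · show a * x.c * σ 1 x.g = x.c * a * σ x.g 1
    rw [sig_one_left σ, sig_one_right σ, mul_one, mul_one, mul_comm]
  · show 1 * x.g = x.g * 1; rw [one_mul, mul_one]

lemma ec_pull (a : Circle) (x t : Ext σ) : x * (ec σ a * t) = ec σ a * (x * t) := by
  rw [← mul_assoc, ← ec_comm, mul_assoc]

lemma ec_ec (a b : Circle) (t : Ext σ) : ec σ a * (ec σ b * t) = ec σ (a * b) * t := by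
  rw [← mul_assoc, ec_mul_ec]

lemma eq_ec_of_g_eq_one {x : Ext σ} (h : x.g = 1) : x = ec σ x.c := Ext.ext rfl h

/-! ### Moving lemmas -/

/-- `x` moves past `w` at the cost of the central scalar `a`. -/
def Mv (x w : Ext σ) (a : Circle) : Prop := x * w = ec σ a * (w * x)

lemma mv_of_commutator {x w : Ext σ} {a : Circle} (h : ⁅x, w⁆ = ec σ a) : Mv σ x w a := by
  have key : x * w = ⁅x, w⁆ * (w * x) := by group
  rw [Mv, key, h]

lemma commutator_of_mv {x w : Ext σ} {a : Circle} (h : Mv σ x w a) : ⁅x, w⁆ = ec σ a := by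
  have key : ⁅x, w⁆ = (x * w) * (w * x)⁻¹ := by group
  rw [key, h, mul_assoc, mul_inv_cancel, mul_one]

lemma mv_iota (x w : Ext σ) (hw : ∀ i, w.g.u i = 0) : Mv σ x w (⁅x, w⁆.c) := by
  apply mv_of_commutator
  apply eq_ec_of_g_eq_one
  have hg : (⁅x, w⁆).g = ⁅x.g, w.g⁆ := map_commutatorElement (eproj σ) x w
  rw [hg, commutatorElement_eq_one_iff_commute]
  exact (central_of_u_eq_zero hw x.g).symm

lemma mv_symm {x w : Ext σ} {a : Circle} (h : Mv σ x w a) : Mv σ w x a⁻¹ := by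
  rw [Mv] at h ⊢
  calc w * x = ec σ a⁻¹ * (ec σ a * (w * x)) := by
        rw [ec_ec, inv_mul_cancel, ec_one, one_mul]
    _ = ec σ a⁻¹ * (x * w) := by rw [← h]

lemma mv_mul_left {x y w : Ext σ} {a b : Circle} (hx : Mv σ x w a) (hy : Mv σ y w b) :
    Mv σ (x * y) w (a * b) := by
  apply mv_of_commutator
  have key : ⁅x * y, w⁆ = x * ⁅y, w⁆ * x⁻¹ * ⁅x, w⁆ := by group
  rw [key, commutator_of_mv σ hy, commutator_of_mv σ hx, ← ec_comm σ b x,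
    mul_inv_cancel_right, ec_mul_ec, mul_comm b a]

lemma mv_one_right (x : Ext σ) : Mv σ x 1 1 := by
  rw [Mv, mul_one, one_mul, ec_one, one_mul]

lemma mv_one_left (w : Ext σ) : Mv σ 1 w 1 := by
  rw [Mv, mul_one, one_mul, ec_one, one_mul]

lemma mv_inv_left {x w : Ext σ} {a : Circle} (hx : Mv σ x w a) : Mv σ x⁻¹ w a⁻¹ := by
  apply mv_of_commutator
  have key : ⁅x⁻¹, w⁆ = x⁻¹ * ⁅x, w⁆⁻¹ * x := by group
  rw [key, commutator_of_mv σ hx, ← map_inv, ← ec_comm σ a⁻¹ x⁻¹, inv_mul_cancel_right]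

lemma mv_inv_right {x w : Ext σ} {a : Circle} (hx : Mv σ x w a) : Mv σ x w⁻¹ a⁻¹ := by
  apply mv_of_commutator
  have key : ⁅x, w⁻¹⁆ = w⁻¹ * ⁅x, w⁆⁻¹ * w := by group
  rw [key, commutator_of_mv σ hx, ← map_inv, ← ec_comm σ a⁻¹ w⁻¹, inv_mul_cancel_right]

lemma mv_mul_right {x w v : Ext σ} {a b : Circle} (hw : Mv σ x w a) (hv : Mv σ x v b) :
    Mv σ x (w * v) (a * b) := by
  apply mv_of_commutator
  have key : ⁅x, w * v⁆ = ⁅x, w⁆ * (w * ⁅x, v⁆ * w⁻¹) := by group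
  rw [key, commutator_of_mv σ hw, commutator_of_mv σ hv, ← ec_comm σ b w,
    mul_inv_cancel_right, ec_mul_ec]

lemma mv_zpow_left {x w : Ext σ} {a : Circle} (hx : Mv σ x w a) (m : ℤ) :
    Mv σ (x ^ m) w (a ^ m) := by
  induction m using Int.induction_on with
  | zero => rw [zpow_zero, zpow_zero]; exact mv_one_left σ w
  | succ i ih =>
    rw [zpow_add_one, zpow_add_one]
    exact mv_mul_left σ ih hx
  | pred i ih =>
    rw [zpow_sub_one, zpow_sub_one]
    exact mv_mul_left σ ih (mv_inv_left σ hx)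

lemma mv_zpow_right {x w : Ext σ} {a : Circle} (hx : Mv σ x w a) (m : ℤ) :
    Mv σ x (w ^ m) (a ^ m) := by
  induction m using Int.induction_on with
  | zero => rw [zpow_zero, zpow_zero]; exact mv_one_right σ x
  | succ i ih =>
    rw [zpow_add_one, zpow_add_one]
    exact mv_mul_right σ ih hx
  | pred i ih =>
    rw [zpow_sub_one, zpow_sub_one]
    exact mv_mul_right σ ih (mv_inv_right σ hx)

lemma mv_zpow₂ {x w : Ext σ} {a : Circle} (hx : Mv σ x w a) (e m : ℤ) :
    Mv σ (x ^ e) (w ^ m) (a ^ (e * m)) := by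
  have := mv_zpow_left σ (mv_zpow_right σ hx m) e
  rwa [← zpow_mul, mul_comm m e] at this

/-- The step form of a moving lemma. -/
lemma mv_step {x w : Ext σ} {a : Circle} (h : Mv σ x w a) (t : Ext σ) :
    x * (w * t) = ec σ a * (w * (x * t)) := by
  rw [← mul_assoc, h, mul_assoc, mul_assoc]

end ExtGroup
/-! ### Generators of the extension -/

section Gens
variable {n : ℕ} (σ : G n → G n → Circle) [MulT σ]

noncomputable def AA (i : Fin n) : Ext σ := ⟨1, uE i⟩
noncomputable def BB (j k : Fin n) : Ext σ := ⁅AA σ j, AA σ k⁆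
noncomputable def lamE (a b c : Fin n) : Circle := (⁅AA σ a, BB σ b c⁆).c

lemma AA_g (i : Fin n) : (AA σ i).g = uE i := rfl

lemma BB_g_u (j k i : Fin n) : (BB σ j k).g.u i = 0 := by
  have h : (BB σ j k).g = ⁅(uE j : G n), uE k⁆ := map_commutatorElement (eproj σ) _ _
  rw [h]; exact commutator_u_eq_zero _ _ i

lemma BB_g {j k : Fin n} (h : j < k) : (BB σ j k).g = vE j k := by
  have h2 : (BB σ j k).g = ⁅(uE j : G n), uE k⁆ := map_commutatorElement (eproj σ) _ _
  rw [h2, uE_commutator h]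

lemma mv_AB (a b c : Fin n) : Mv σ (AA σ a) (BB σ b c) (lamE σ a b c) :=
  mv_iota σ _ _ (BB_g_u σ b c)

lemma mv_BB (j k p q : Fin n) : Mv σ (BB σ j k) (BB σ p q) 1 := by
  have h : ∀ x : Ext σ, Mv σ x (BB σ p q) (⁅x, BB σ p q⁆.c) :=
    fun x => mv_iota σ x _ (BB_g_u σ p q)
  have m1 := h (AA σ j); have m2 := h (AA σ k)
  have key := mv_mul_left σ (mv_mul_left σ (mv_mul_left σ m1 m2) (mv_inv_left σ m1))
    (mv_inv_left σ m2)
  have e : BB σ j k = AA σ j * AA σ k * (AA σ j)⁻¹ * (AA σ k)⁻¹ := commutatorElement_def _ _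
  show BB σ j k * BB σ p q = ec σ 1 * (BB σ p q * BB σ j k)
  rw [e]
  rw [Mv] at key
  rw [key]
  congr 2
  rw [mul_comm (⁅AA σ j, BB σ p q⁆.c) (⁅AA σ k, BB σ p q⁆.c), mul_inv_cancel_right,
    mul_inv_cancel]

/-- The Jacobi relation. -/
lemma jacobi (a b c : Fin n) :
    Mv σ (AA σ c) (BB σ a b) ((lamE σ a b c)⁻¹ * lamE σ b a c) := by
  set x := AA σ a with hx
  set y := AA σ b with hy
  set z := AA σ c with hz
  set P := BB σ a c with hP
  set Q := BB σ b c with hQ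
  set α := lamE σ a b c with hα
  set β := lamE σ b a c with hβ
  set γ := lamE σ a a c with hγ
  set δ := lamE σ b b c with hδ
  have hzx : ∀ t : Ext σ, z * (x * t) = P⁻¹ * (x * (z * t)) := by
    intro t
    have hbase : z * x = P⁻¹ * (x * z) := by
      rw [hP, hx, hz]; show AA σ c * AA σ a = ⁅AA σ a, AA σ c⁆⁻¹ * (AA σ a * AA σ c); group
    calc z * (x * t) = (z * x) * t := by group
      _ = (P⁻¹ * (x * z)) * t := by rw [hbase]
      _ = P⁻¹ * (x * (z * t)) := by group
  have hzy : ∀ t : Ext σ, z * (y * t) = Q⁻¹ * (y * (z * t)) := by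
    intro t
    have hbase : z * y = Q⁻¹ * (y * z) := by
      rw [hQ, hy, hz]; show AA σ c * AA σ b = ⁅AA σ b, AA σ c⁆⁻¹ * (AA σ b * AA σ c); group
    calc z * (y * t) = (z * y) * t := by group
      _ = (Q⁻¹ * (y * z)) * t := by rw [hbase]
      _ = Q⁻¹ * (y * (z * t)) := by group
  have hzx' : ∀ t : Ext σ, z * (x⁻¹ * t) = x⁻¹ * (P * (z * t)) := by
    intro t
    have hbase : z * x⁻¹ = x⁻¹ * (P * z) := by
      rw [hP, hx, hz]
      show AA σ c * (AA σ a)⁻¹ = (AA σ a)⁻¹ * (⁅AA σ a, AA σ c⁆ * AA σ c); group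
    calc z * (x⁻¹ * t) = (z * x⁻¹) * t := by group
      _ = (x⁻¹ * (P * z)) * t := by rw [hbase]
      _ = x⁻¹ * (P * (z * t)) := by group
  have hzy'0 : z * y⁻¹ = y⁻¹ * (Q * z) := by
    rw [hQ, hy, hz]
    show AA σ c * (AA σ b)⁻¹ = (AA σ b)⁻¹ * (⁅AA σ b, AA σ c⁆ * AA σ c); group
  -- scalar moves
  have mxinvP : ∀ t : Ext σ, x⁻¹ * (P * t) = ec σ γ⁻¹ * (P * (x⁻¹ * t)) :=
    mv_step σ (mv_inv_left σ (mv_AB σ a a c))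
  have myP : ∀ t : Ext σ, y * (P * t) = ec σ β * (P * (y * t)) :=
    mv_step σ (mv_AB σ b a c)
  have mxP : ∀ t : Ext σ, x * (P * t) = ec σ γ * (P * (x * t)) :=
    mv_step σ (mv_AB σ a a c)
  have hQP : ∀ t : Ext σ, Q⁻¹ * (P * t) = P * (Q⁻¹ * t) := by
    intro t
    have := mv_step σ (mv_inv_left σ (mv_BB σ b c a c)) t
    rwa [inv_one, ec_one, one_mul] at this
  have myinvQ : ∀ t : Ext σ, y⁻¹ * (Q * t) = ec σ δ⁻¹ * (Q * (y⁻¹ * t)) :=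
    mv_step σ (mv_inv_left σ (mv_AB σ b b c))
  have mxinvQ : ∀ t : Ext σ, x⁻¹ * (Q * t) = ec σ α⁻¹ * (Q * (x⁻¹ * t)) :=
    mv_step σ (mv_inv_left σ (mv_AB σ a b c))
  have myQ : ∀ t : Ext σ, y * (Q * t) = ec σ δ * (Q * (y * t)) :=
    mv_step σ (mv_AB σ b b c)
  have hB : BB σ a b = x * (y * (x⁻¹ * y⁻¹)) := by
    rw [hx, hy]; show ⁅AA σ a, AA σ b⁆ = _; group
  have hBz : BB σ a b * z = x * (y * (x⁻¹ * (y⁻¹ * z))) := by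
    rw [hB]; group
  show z * BB σ a b = ec σ (α⁻¹ * β) * (BB σ a b * z)
  rw [hBz]
  calc z * BB σ a b = z * (x * (y * (x⁻¹ * y⁻¹))) := by rw [hB]
    _ = P⁻¹ * (x * (z * (y * (x⁻¹ * y⁻¹)))) := hzx _
    _ = P⁻¹ * (x * (Q⁻¹ * (y * (z * (x⁻¹ * y⁻¹))))) := by rw [hzy]
    _ = P⁻¹ * (x * (Q⁻¹ * (y * (x⁻¹ * (P * (z * y⁻¹)))))) := by rw [hzx']
    _ = P⁻¹ * (x * (Q⁻¹ * (y * (x⁻¹ * (P * (y⁻¹ * (Q * z))))))) := by rw [hzy'0]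
    _ = ec σ γ⁻¹ * (P⁻¹ * (x * (Q⁻¹ * (y * (P * (x⁻¹ * (y⁻¹ * (Q * z)))))))) := by
        rw [mxinvP, ec_pull σ γ⁻¹ y, ec_pull σ γ⁻¹ Q⁻¹, ec_pull σ γ⁻¹ x, ec_pull σ γ⁻¹ P⁻¹]
    _ = ec σ γ⁻¹ * (ec σ β * (P⁻¹ * (x * (Q⁻¹ * (P * (y * (x⁻¹ * (y⁻¹ * (Q * z))))))))) := by
        rw [myP, ec_pull σ β Q⁻¹, ec_pull σ β x, ec_pull σ β P⁻¹]
    _ = ec σ γ⁻¹ * (ec σ β * (P⁻¹ * (x * (P * (Q⁻¹ * (y * (x⁻¹ * (y⁻¹ * (Q * z))))))))) := by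
        rw [hQP]
    _ = ec σ γ⁻¹ * (ec σ β * (ec σ γ * (P⁻¹ * (P * (x * (Q⁻¹ * (y * (x⁻¹ * (y⁻¹ * (Q * z)))))))))) := by
        rw [mxP, ec_pull σ γ P⁻¹]
    _ = ec σ γ⁻¹ * (ec σ β * (ec σ γ * (x * (Q⁻¹ * (y * (x⁻¹ * (y⁻¹ * (Q * z)))))))) := by
        rw [inv_mul_cancel_left]
    _ = ec σ γ⁻¹ * (ec σ β * (ec σ γ * (ec σ δ⁻¹ * (x * (Q⁻¹ * (y * (x⁻¹ * (Q * (y⁻¹ * z))))))))) := by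
        rw [myinvQ, ec_pull σ δ⁻¹ x⁻¹, ec_pull σ δ⁻¹ y, ec_pull σ δ⁻¹ Q⁻¹, ec_pull σ δ⁻¹ x]
    _ = ec σ γ⁻¹ * (ec σ β * (ec σ γ * (ec σ δ⁻¹ * (ec σ α⁻¹ * (x * (Q⁻¹ * (y * (Q * (x⁻¹ * (y⁻¹ * z)))))))))) := by
        rw [mxinvQ, ec_pull σ α⁻¹ y, ec_pull σ α⁻¹ Q⁻¹, ec_pull σ α⁻¹ x]
    _ = ec σ γ⁻¹ * (ec σ β * (ec σ γ * (ec σ δ⁻¹ * (ec σ α⁻¹ * (ec σ δ * (x * (Q⁻¹ * (Q * (y * (x⁻¹ * (y⁻¹ * z))))))))))) := by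
        rw [myQ, ec_pull σ δ Q⁻¹, ec_pull σ δ x]
    _ = ec σ γ⁻¹ * (ec σ β * (ec σ γ * (ec σ δ⁻¹ * (ec σ α⁻¹ * (ec σ δ * (x * (y * (x⁻¹ * (y⁻¹ * z))))))))) := by
        rw [inv_mul_cancel_left]
    _ = ec σ (α⁻¹ * β) * (x * (y * (x⁻¹ * (y⁻¹ * z)))) := by
        simp only [ec_ec]
        refine congrArg (fun u : Circle => ec σ u * (x * (y * (x⁻¹ * (y⁻¹ * z))))) ?_
        rw [mul_comm α⁻¹ δ, inv_mul_cancel_left, mul_left_comm β γ, inv_mul_cancel_left,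
          mul_comm β α⁻¹]

end Gens
/-! ### Collection (swap) lemmas for powers -/

section Swap
variable {n : ℕ} (σ : G n → G n → Circle) [MulT σ]

lemma pow_pull (b : Ext σ) (i : ℤ) (t : Ext σ) : b * (b ^ i * t) = b ^ (i + 1) * t := by
  rw [← mul_assoc, ← zpow_one_add, add_comm 1 i]

lemma pow_pow_pull (b : Ext σ) (a i : ℤ) (t : Ext σ) :
    b ^ a * (b ^ i * t) = b ^ (a + i) * t := by
  rw [← mul_assoc, ← zpow_add]

lemma conj_flip {A Y S Bv : Ext σ} (h : A * Y = S * (Bv * (Y * A))) :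
    A * Y⁻¹ = Y⁻¹ * (Bv⁻¹ * (S⁻¹ * A)) := by
  calc A * Y⁻¹ = Y⁻¹ * (Bv⁻¹ * (S⁻¹ * (S * (Bv * (Y * A)) * Y⁻¹))) := by group
    _ = Y⁻¹ * (Bv⁻¹ * (S⁻¹ * ((A * Y) * Y⁻¹))) := by rw [h]
    _ = Y⁻¹ * (Bv⁻¹ * (S⁻¹ * A)) := by group

variable {x y b : Ext σ} {l1 l2 : Circle}

lemma swap_one (hxy : x * y = b * (y * x)) (h1 : Mv σ x b l1) (e : ℤ) :
    x ^ e * y = ec σ (l1 ^ (e * (e - 1) / 2)) * (b ^ e * (y * x ^ e)) := by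
  induction e using Int.induction_on with
  | zero => norm_num
  | succ i ih =>
    rw [zpow_add_one, mul_assoc, hxy, mv_step σ (mv_zpow_left σ h1 i),
      show x ^ (i:ℤ) * (y * x) = (x ^ (i:ℤ) * y) * x from by rw [mul_assoc], ih,
      show (ec σ (l1 ^ ((i:ℤ) * ((i:ℤ) - 1) / 2)) * (b ^ (i:ℤ) * (y * x ^ (i:ℤ)))) * x =
        ec σ (l1 ^ ((i:ℤ) * ((i:ℤ) - 1) / 2)) * (b ^ (i:ℤ) * (y * (x ^ (i:ℤ) * x))) from by
        simp only [mul_assoc],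
      ec_pull σ _ b, ec_ec, pow_pull, ← zpow_add_one, ← zpow_add,
      show (i:ℤ) + (i:ℤ) * ((i:ℤ) - 1) / 2 = ((i:ℤ) + 1) * ((i:ℤ) + 1 - 1) / 2 from by
        linarith [half_succ (i:ℤ)]]
  | pred i ih =>
    have hxy' : x⁻¹ * y = ec σ l1 * (b⁻¹ * (y * x⁻¹)) := by
      have e1 : y * x = b⁻¹ * (x * y) := by rw [hxy]; group
      have h1' : Mv σ x⁻¹ b⁻¹ l1 := by
        have := mv_inv_right σ (mv_inv_left σ h1); rwa [inv_inv] at this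
      calc x⁻¹ * y = x⁻¹ * ((y * x) * x⁻¹) := by group
        _ = x⁻¹ * ((b⁻¹ * (x * y)) * x⁻¹) := by rw [e1]
        _ = (x⁻¹ * b⁻¹) * (x * (y * x⁻¹)) := by group
        _ = (ec σ l1 * (b⁻¹ * x⁻¹)) * (x * (y * x⁻¹)) := by rw [h1']
        _ = ec σ l1 * (b⁻¹ * (y * x⁻¹)) := by group
    rw [zpow_sub_one, mul_assoc, hxy', ec_pull σ _ (x ^ (-(i:ℤ))),
      mv_step σ (mv_zpow_left σ (mv_inv_right σ h1) (-(i:ℤ))),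
      show x ^ (-(i:ℤ)) * (y * x⁻¹) = (x ^ (-(i:ℤ)) * y) * x⁻¹ from by rw [mul_assoc], ih,
      show (ec σ (l1 ^ ((-(i:ℤ)) * ((-(i:ℤ)) - 1) / 2)) * (b ^ (-(i:ℤ)) * (y * x ^ (-(i:ℤ))))) * x⁻¹ =
        ec σ (l1 ^ ((-(i:ℤ)) * ((-(i:ℤ)) - 1) / 2)) * (b ^ (-(i:ℤ)) * (y * (x ^ (-(i:ℤ)) * x⁻¹))) from by
        simp only [mul_assoc],
      ec_pull σ _ b⁻¹, ec_ec, ec_ec,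
      show b⁻¹ * (b ^ (-(i:ℤ)) * (y * (x ^ (-(i:ℤ)) * x⁻¹))) =
        b ^ (-(i:ℤ) - 1) * (y * (x ^ (-(i:ℤ)) * x⁻¹)) from by
        rw [← mul_assoc, ← zpow_neg_one, ← zpow_add]; congr 2; ring,
      show x ^ (-(i:ℤ)) * x⁻¹ = x ^ (-(i:ℤ) - 1) from by rw [← zpow_sub_one],
      inv_zpow, ← zpow_neg, neg_neg,
      mul_assoc l1 (l1 ^ (i:ℤ)) (l1 ^ ((-(i:ℤ)) * ((-(i:ℤ)) - 1) / 2)), ← zpow_add, ← zpow_one_add,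
      show 1 + ((i:ℤ) + (-(i:ℤ)) * ((-(i:ℤ)) - 1) / 2) = (-(i:ℤ) - 1) * ((-(i:ℤ) - 1) - 1) / 2 from by
        linarith [half_pred (-(i:ℤ))]]

lemma swap_one_inv (hxy : x * y = b * (y * x)) (h1 : Mv σ x b l1) (h2 : Mv σ y b l2) (e : ℤ) :
    x ^ e * y⁻¹ = ec σ (l1 ^ (-(e * (e - 1) / 2)) * l2 ^ e) * (b ^ (-e) * (y⁻¹ * x ^ e)) := by
  have key := conj_flip σ (swap_one σ hxy h1 e)
  have hmv : Mv σ y⁻¹ (b ^ e)⁻¹ ((l2⁻¹ ^ e)⁻¹) :=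
    mv_inv_right σ (mv_zpow_right σ (mv_inv_left σ h2) e)
  rw [key, ← map_inv, ec_pull σ _ ((b ^ e)⁻¹), ec_pull σ _ y⁻¹, mv_step σ hmv, ec_ec,
    zpow_neg b e, inv_zpow l2, inv_inv, ← zpow_neg]

lemma swap (hxy : x * y = b * (y * x)) (h1 : Mv σ x b l1) (h2 : Mv σ y b l2) (e m : ℤ) :
    x ^ e * y ^ m = ec σ (l1 ^ (m * (e * (e - 1) / 2)) * l2 ^ (e * (m * (m - 1) / 2))) *
      (b ^ (e * m) * (y ^ m * x ^ e)) := by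
  induction m using Int.induction_on with
  | zero => norm_num
  | succ i ih =>
    rw [zpow_add_one,
      show x ^ e * (y ^ (i:ℤ) * y) = (x ^ e * y ^ (i:ℤ)) * y from by rw [mul_assoc], ih,
      show (ec σ (l1 ^ ((i:ℤ) * (e * (e - 1) / 2)) * l2 ^ (e * ((i:ℤ) * ((i:ℤ) - 1) / 2))) *
          (b ^ (e * (i:ℤ)) * (y ^ (i:ℤ) * x ^ e))) * y =
        ec σ (l1 ^ ((i:ℤ) * (e * (e - 1) / 2)) * l2 ^ (e * ((i:ℤ) * ((i:ℤ) - 1) / 2))) *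
          (b ^ (e * (i:ℤ)) * (y ^ (i:ℤ) * (x ^ e * y))) from by simp only [mul_assoc],
      swap_one σ hxy h1 e, ec_pull σ _ (y ^ (i:ℤ)), ec_pull σ _ (b ^ (e * (i:ℤ))), ec_ec,
      mv_step σ (mv_zpow₂ σ h2 (i:ℤ) e), ec_pull σ _ (b ^ (e * (i:ℤ))), ec_ec,
      pow_pow_pull,
      show y ^ (i:ℤ) * (y * x ^ e) = (y ^ (i:ℤ) * y) * x ^ e from by rw [mul_assoc],
      ← zpow_add_one,
      show e * (i:ℤ) + e = e * ((i:ℤ) + 1) from by ring,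
      show l1 ^ ((i:ℤ) * (e * (e - 1) / 2)) * l2 ^ (e * ((i:ℤ) * ((i:ℤ) - 1) / 2)) *
          (l1 ^ (e * (e - 1) / 2)) * (l2 ^ ((i:ℤ) * e)) =
        (l1 ^ ((i:ℤ) * (e * (e - 1) / 2)) * l1 ^ (e * (e - 1) / 2)) *
          (l2 ^ (e * ((i:ℤ) * ((i:ℤ) - 1) / 2)) * l2 ^ ((i:ℤ) * e)) from by
        simp only [mul_comm, mul_left_comm, mul_assoc],
      ← zpow_add, ← zpow_add,
      show (i:ℤ) * (e * (e - 1) / 2) + e * (e - 1) / 2 = ((i:ℤ) + 1) * (e * (e - 1) / 2) from by ring,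
      show e * ((i:ℤ) * ((i:ℤ) - 1) / 2) + (i:ℤ) * e = e * (((i:ℤ) + 1) * ((i:ℤ) + 1 - 1) / 2) from by
        linear_combination (-e) * (half_succ (i:ℤ))]
  | pred i ih =>
    rw [zpow_sub_one,
      show x ^ e * (y ^ (-(i:ℤ)) * y⁻¹) = (x ^ e * y ^ (-(i:ℤ))) * y⁻¹ from by rw [mul_assoc], ih,
      show (ec σ (l1 ^ ((-(i:ℤ)) * (e * (e - 1) / 2)) * l2 ^ (e * ((-(i:ℤ)) * ((-(i:ℤ)) - 1) / 2))) *
          (b ^ (e * (-(i:ℤ))) * (y ^ (-(i:ℤ)) * x ^ e))) * y⁻¹ =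
        ec σ (l1 ^ ((-(i:ℤ)) * (e * (e - 1) / 2)) * l2 ^ (e * ((-(i:ℤ)) * ((-(i:ℤ)) - 1) / 2))) *
          (b ^ (e * (-(i:ℤ))) * (y ^ (-(i:ℤ)) * (x ^ e * y⁻¹))) from by simp only [mul_assoc],
      swap_one_inv σ hxy h1 h2 e, ec_pull σ _ (y ^ (-(i:ℤ))), ec_pull σ _ (b ^ (e * (-(i:ℤ)))), ec_ec,
      mv_step σ (mv_zpow₂ σ h2 (-(i:ℤ)) (-e)), ec_pull σ _ (b ^ (e * (-(i:ℤ)))), ec_ec,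
      pow_pow_pull,
      show y ^ (-(i:ℤ)) * (y⁻¹ * x ^ e) = (y ^ (-(i:ℤ)) * y⁻¹) * x ^ e from by rw [mul_assoc],
      ← zpow_sub_one,
      show e * (-(i:ℤ)) + -e = e * (-(i:ℤ) - 1) from by ring,
      show l1 ^ ((-(i:ℤ)) * (e * (e - 1) / 2)) * l2 ^ (e * ((-(i:ℤ)) * ((-(i:ℤ)) - 1) / 2)) *
          (l1 ^ (-(e * (e - 1) / 2)) * l2 ^ e) * (l2 ^ ((-(i:ℤ)) * (-e))) =
        (l1 ^ ((-(i:ℤ)) * (e * (e - 1) / 2)) * l1 ^ (-(e * (e - 1) / 2))) *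
          (l2 ^ (e * ((-(i:ℤ)) * ((-(i:ℤ)) - 1) / 2)) * (l2 ^ e * l2 ^ ((-(i:ℤ)) * (-e)))) from by
        simp only [mul_comm, mul_left_comm, mul_assoc],
      ← zpow_add, ← zpow_add, ← zpow_add,
      show (-(i:ℤ)) * (e * (e - 1) / 2) + -(e * (e - 1) / 2) = (-(i:ℤ) - 1) * (e * (e - 1) / 2) from by
        ring,
      show e * ((-(i:ℤ)) * ((-(i:ℤ)) - 1) / 2) + (e + (-(i:ℤ)) * (-e)) =
          e * ((-(i:ℤ) - 1) * ((-(i:ℤ) - 1) - 1) / 2) from by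
        linear_combination (-e) * (half_pred (-(i:ℤ)))]

end Swap
/-! ### The section -/

section Sect
variable {n : ℕ} (σ : G n → G n → Circle) [MulT σ]

noncomputable def seqUp (f : Fin n → Ext σ) : ℕ → Ext σ
  | 0 => 1
  | k+1 => seqUp f k * (if h : k < n then f ⟨k, h⟩ else 1)

lemma seqUp_succ (f : Fin n → Ext σ) (k : ℕ) (h : k < n) :
    seqUp σ f (k+1) = seqUp σ f k * f ⟨k, h⟩ := by
  show seqUp σ f k * _ = _
  rw [dif_pos h]

noncomputable def seqDn (f : Fin n → Ext σ) : ℕ → Ext σ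
  | 0 => 1
  | k+1 => (if h : k < n then f ⟨k, h⟩ else 1) * seqDn f k

lemma seqDn_succ (f : Fin n → Ext σ) (k : ℕ) (h : k < n) :
    seqDn σ f (k+1) = f ⟨k, h⟩ * seqDn σ f k := by
  show (_ : Ext σ) * _ = _
  rw [dif_pos h]

lemma seqUp_congr {f g : Fin n → Ext σ} (h : ∀ j, f j = g j) (k : ℕ) :
    seqUp σ f k = seqUp σ g k := by
  have : f = g := funext h
  rw [this]

lemma seqDn_congr_below {f g : Fin n → Ext σ} (k : ℕ) (h : ∀ j : Fin n, j.val < k → f j = g j) :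
    seqDn σ f k = seqDn σ g k := by
  induction k with
  | zero => rfl
  | succ k ih =>
    show (if hk : k < n then f ⟨k, hk⟩ else 1) * seqDn σ f k =
      (if hk : k < n then g ⟨k, hk⟩ else 1) * seqDn σ g k
    rw [ih (fun j hj => h j (Nat.lt_succ_of_lt hj))]
    congr 1
    split
    · exact h _ (Nat.lt_succ_self k)
    · rfl

lemma filter_lt_zero : Finset.univ.filter (fun a : Fin n => a.val < 0) = ∅ := by
  ext a; simp

lemma filter_lt_succ (k : ℕ) (h : k < n) :
    Finset.univ.filter (fun a : Fin n => a.val < k + 1) =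
      insert ⟨k, h⟩ (Finset.univ.filter (fun a : Fin n => a.val < k)) := by
  ext a
  simp [Fin.ext_iff]
  omega

lemma filter_lt_succ_ge (k : ℕ) (h : ¬ k < n) :
    Finset.univ.filter (fun a : Fin n => a.val < k + 1) =
      Finset.univ.filter (fun a : Fin n => a.val < k) := by
  ext a
  have := a.isLt
  simp
  omega

lemma not_mem_filter_lt (k : ℕ) (h : k < n) :
    (⟨k, h⟩ : Fin n) ∉ Finset.univ.filter (fun a : Fin n => a.val < k) := by
  simp

/-- Moving an element right past an ascending product. -/
lemma mv_seqUp {x : Ext σ} {f : Fin n → Ext σ} {α : Fin n → Circle}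
    (h : ∀ j, Mv σ x (f j) (α j)) (k : ℕ) :
    Mv σ x (seqUp σ f k) (∏ a ∈ Finset.univ.filter (fun a : Fin n => a.val < k), α a) := by
  induction k with
  | zero =>
    rw [filter_lt_zero, Finset.prod_empty]
    exact mv_one_right σ x
  | succ k ih =>
    by_cases hk : k < n
    · rw [seqUp_succ σ f k hk, filter_lt_succ k hk, Finset.prod_insert (not_mem_filter_lt k hk),
        mul_comm (α ⟨k, hk⟩)]
      exact mv_mul_right σ ih (h ⟨k, hk⟩)
    · show Mv σ x (seqUp σ f k * _) _
      rw [dif_neg hk, mul_one, filter_lt_succ_ge k hk]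
      exact ih

/-- Moving an ascending product right past an element. -/
lemma mv_seqUp_left {w : Ext σ} {f : Fin n → Ext σ} {α : Fin n → Circle}
    (h : ∀ j, Mv σ (f j) w (α j)) (k : ℕ) :
    Mv σ (seqUp σ f k) w (∏ a ∈ Finset.univ.filter (fun a : Fin n => a.val < k), α a) := by
  induction k with
  | zero =>
    rw [filter_lt_zero, Finset.prod_empty]
    exact mv_one_left σ w
  | succ k ih =>
    by_cases hk : k < n
    · rw [seqUp_succ σ f k hk, filter_lt_succ k hk, Finset.prod_insert (not_mem_filter_lt k hk),
        mul_comm (α ⟨k, hk⟩)]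
      exact mv_mul_left σ ih (h ⟨k, hk⟩)
    · show Mv σ (seqUp σ f k * _) w _
      rw [dif_neg hk, mul_one, filter_lt_succ_ge k hk]
      exact ih

lemma seqUp_mul {f g : Fin n → Ext σ} (hc : ∀ i j, Mv σ (g i) (f j) 1) (k : ℕ) :
    seqUp σ f k * seqUp σ g k = seqUp σ (fun i => f i * g i) k := by
  induction k with
  | zero => show (1 : Ext σ) * 1 = 1; rw [mul_one]
  | succ k ih =>
    by_cases hk : k < n
    · rw [seqUp_succ σ f k hk, seqUp_succ σ g k hk, seqUp_succ σ (fun i => f i * g i) k hk]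
      have hmv : Mv σ (seqUp σ g k) (f ⟨k, hk⟩) 1 := by
        have := mv_seqUp_left σ (fun j => hc j ⟨k, hk⟩) k
        rwa [Finset.prod_const_one] at this
      calc seqUp σ f k * f ⟨k, hk⟩ * (seqUp σ g k * g ⟨k, hk⟩)
          = seqUp σ f k * ((f ⟨k, hk⟩ * seqUp σ g k) * g ⟨k, hk⟩) := by
            simp only [mul_assoc]
        _ = seqUp σ f k * ((seqUp σ g k * f ⟨k, hk⟩) * g ⟨k, hk⟩) := by
            have h1 : f ⟨k, hk⟩ * seqUp σ g k = seqUp σ g k * f ⟨k, hk⟩ := by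
              have h2 := mv_symm σ hmv
              rw [Mv, inv_one, ec_one, one_mul] at h2
              exact h2
            rw [h1]
        _ = (seqUp σ f k * seqUp σ g k) * (f ⟨k, hk⟩ * g ⟨k, hk⟩) := by
            simp only [mul_assoc]
        _ = seqUp σ (fun i => f i * g i) k * (f ⟨k, hk⟩ * g ⟨k, hk⟩) := by rw [ih]
    · show seqUp σ f k * _ * (seqUp σ g k * _) = seqUp σ (fun i => f i * g i) k * _
      rw [dif_neg hk, dif_neg hk, dif_neg hk, mul_one, mul_one, mul_one, ih]

/-- A `seqUp` supported at one index. -/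
lemma seqUp_single (X : Fin n → Ext σ) (p : Fin n) (k : ℕ) :
    seqUp σ (fun j => if j = p then X j else 1) k =
      (if p.val < k then X p else 1) := by
  induction k with
  | zero => rw [if_neg (by omega)]; rfl
  | succ k ih =>
    by_cases hk : k < n
    · rw [seqUp_succ σ _ k hk, ih]
      by_cases hp : (⟨k, hk⟩ : Fin n) = p
      · have hpk : p.val = k := by rw [← hp]
        rw [if_pos hp, if_neg (by omega), if_pos (by omega), one_mul, hp]
      · have hpk : p.val ≠ k := by
          intro hc; exact hp (Fin.ext (by simp [hc]))
        rw [if_neg hp, mul_one]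
        by_cases h2 : p.val < k
        · rw [if_pos h2, if_pos (by omega)]
        · rw [if_neg h2, if_neg (by omega)]
    · show seqUp σ _ k * _ = _
      rw [dif_neg hk, mul_one, ih]
      have := p.isLt
      by_cases h2 : p.val < k
      · rw [if_pos h2, if_pos (by omega)]
      · omega

end Sect
/-! ### Blocks and the section map -/

section Blocks
variable {n : ℕ} (σ : G n → G n → Circle) [MulT σ]

noncomputable def Bblk (r : G n) (k : Fin n) : Ext σ :=
  seqUp σ (fun j => BB σ j k ^ (vc r j k)) n

noncomputable def blk (r : G n) (k : Fin n) : Ext σ := Bblk σ r k * AA σ k ^ (uc r k)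

noncomputable def sect (r : G n) : Ext σ := seqDn σ (blk σ r) n

lemma Bblk_g_aux (r : G n) (k : Fin n) (t : ℕ) :
    (seqUp σ (fun j => BB σ j k ^ (vc r j k)) t).g =
      ⟨fun _ => 0, fun p => if p.1.2 = k ∧ p.1.1.val < t then r.v p else 0⟩ := by
  induction t with
  | zero =>
    refine G.ext (funext fun i => rfl) (funext fun p => ?_)
    show (0:ℤ) = if p.1.2 = k ∧ (p.1.1:ℕ) < 0 then r.v p else 0
    rw [if_neg (by rintro ⟨-, h⟩; omega)]
  | succ t ih =>
    by_cases ht : t < n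
    · rw [seqUp_succ σ _ t ht, emul_g, ih]
      have hf : ((BB σ ⟨t, ht⟩ k ^ (vc r ⟨t, ht⟩ k)).g) =
          (⟨fun _ => 0, fun p => if p.1 = (⟨t, ht⟩, k) then vc r ⟨t, ht⟩ k else 0⟩ : G n) := by
        rw [eg_zpow]
        by_cases hlt : (⟨t, ht⟩ : Fin n) < k
        · rw [BB_g σ hlt, vE_zpow]
        · rw [vc_of_not_lt r hlt, zpow_zero]
          refine G.ext (funext fun i => rfl) (funext fun p => ?_)
          show (0:ℤ) = if p.1 = (⟨t, ht⟩, k) then 0 else 0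
          split <;> rfl
      rw [hf]
      refine G.ext ?_ ?_ <;> funext x
      · show (0:ℤ) + 0 = 0; ring
      · rcases x with ⟨⟨a, b⟩, hab⟩
        show (if b = k ∧ (a:ℕ) < t then r.v ⟨(a,b),hab⟩ else 0) +
            (if (a, b) = ((⟨t, ht⟩ : Fin n), k) then vc r ⟨t, ht⟩ k else 0) + 0 * 0 =
          if b = k ∧ (a:ℕ) < t + 1 then r.v ⟨(a,b),hab⟩ else 0
        rw [mul_zero, add_zero]
        by_cases h1 : b = k
        · subst h1
          by_cases h3 : a = ⟨t, ht⟩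
          · subst h3
            have h2 : ¬ ((⟨t, ht⟩ : Fin n) : ℕ) < t := by simp
            rw [if_neg (fun hc => h2 hc.2), if_pos rfl, if_pos ⟨rfl, by simp⟩, zero_add,
              vc_pos r hab]
          · have hav : (a:ℕ) ≠ t := fun hc => h3 (Fin.ext hc)
            rw [if_neg (fun hc => h3 (congrArg Prod.fst hc)), add_zero]
            by_cases h2 : (a:ℕ) < t
            · rw [if_pos ⟨rfl, h2⟩, if_pos ⟨rfl, by omega⟩]
            · rw [if_neg (fun hc => h2 hc.2), if_neg (by rintro ⟨-, hc⟩; omega)]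
        · rw [if_neg (fun hc => h1 hc.1), if_neg (fun hc => h1 (congrArg Prod.snd hc)),
            if_neg (fun hc => h1 hc.1), add_zero]
    · show (seqUp σ _ t * _).g = _
      rw [dif_neg ht, mul_one, ih]
      refine G.ext (funext fun i => rfl) (funext fun p => ?_)
      show (if p.1.2 = k ∧ (p.1.1:ℕ) < t then r.v p else 0) =
        if p.1.2 = k ∧ (p.1.1:ℕ) < t + 1 then r.v p else 0
      have hlt := p.1.1.isLt
      by_cases h1 : p.1.2 = k ∧ (p.1.1:ℕ) < t
      · rw [if_pos h1, if_pos ⟨h1.1, by omega⟩]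
      · rw [if_neg h1, if_neg (fun hc => h1 ⟨hc.1, by omega⟩)]

lemma Bblk_g (r : G n) (k : Fin n) :
    (Bblk σ r k).g = ⟨fun _ => 0, fun p => if p.1.2 = k then r.v p else 0⟩ := by
  rw [Bblk, Bblk_g_aux]
  refine G.ext rfl (funext fun p => ?_)
  show (if p.1.2 = k ∧ (p.1.1:ℕ) < n then r.v p else 0) = if p.1.2 = k then r.v p else 0
  rw [if_congr (and_iff_left p.1.1.isLt) rfl rfl]

lemma blk_g (r : G n) (k : Fin n) :
    (blk σ r k).g = ⟨fun i => if i = k then r.u i else 0,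
      fun p => if p.1.2 = k then r.v p else 0⟩ := by
  rw [blk, emul_g, Bblk_g, eg_zpow, AA_g, uE_zpow]
  refine G.ext ?_ ?_ <;> funext x
  · show 0 + (if x = k then uc r k else 0) = if x = k then r.u x else 0
    by_cases h : x = k
    · rw [if_pos h, if_pos h, zero_add, h]; rfl
    · rw [if_neg h, if_neg h, add_zero]
  · show (if x.1.2 = k then r.v x else 0) + 0 + 0 * (if x.1.2 = k then uc r k else 0) =
      if x.1.2 = k then r.v x else 0
    rw [zero_mul, add_zero, add_zero]

lemma seqDn_blk_g (r : G n) : ∀ t, t ≤ n → (seqDn σ (blk σ r) t).g =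
    ⟨fun i => if i.val < t then r.u i else 0, fun p => if p.1.2.val < t then r.v p else 0⟩ := by
  intro t
  induction t with
  | zero =>
    intro _
    refine G.ext ?_ ?_ <;> funext x
    · show (0:ℤ) = if (x:ℕ) < 0 then r.u x else 0
      rw [if_neg (by omega)]
    · show (0:ℤ) = if (x.1.2:ℕ) < 0 then r.v x else 0
      rw [if_neg (by omega)]
  | succ t ih =>
    intro ht2
    have ht : t < n := by omega
    rw [seqDn_succ σ _ t ht, emul_g, ih (by omega), blk_g]
    refine G.ext ?_ ?_ <;> funext x
    · show (if x = ⟨t, ht⟩ then r.u x else 0) + (if (x:ℕ) < t then r.u x else 0) =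
        if (x:ℕ) < t + 1 then r.u x else 0
      by_cases h1 : x = ⟨t, ht⟩
      · have hx : (x:ℕ) = t := by rw [h1]
        rw [if_pos h1, if_neg (by omega), if_pos (by omega), add_zero]
      · have hx : (x:ℕ) ≠ t := fun hc => h1 (Fin.ext hc)
        rw [if_neg h1, zero_add]
        by_cases h2 : (x:ℕ) < t
        · rw [if_pos h2, if_pos (by omega)]
        · rw [if_neg h2, if_neg (by omega)]
    · rcases x with ⟨⟨a, b⟩, hab⟩
      have hab' : (a:ℕ) < (b:ℕ) := hab
      show (if b = ⟨t, ht⟩ then r.v ⟨(a,b),hab⟩ else 0) +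
          (if (b:ℕ) < t then r.v ⟨(a,b),hab⟩ else 0) +
          (if a = ⟨t, ht⟩ then r.u a else 0) * (if (b:ℕ) < t then r.u b else 0) =
        if (b:ℕ) < t + 1 then r.v ⟨(a,b),hab⟩ else 0
      by_cases h1 : b = ⟨t, ht⟩
      · have hb : (b:ℕ) = t := by rw [h1]
        have ha : ¬ a = ⟨t, ht⟩ := by
          intro hc
          have : (a:ℕ) = t := by rw [hc]
          omega
        rw [if_pos h1, if_neg (by omega), if_neg ha, zero_mul, add_zero, add_zero,
          if_pos (by omega)]
      · have hb : (b:ℕ) ≠ t := fun hc => h1 (Fin.ext hc)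
        rw [if_neg h1, zero_add]
        by_cases h2 : (b:ℕ) < t
        · have ha : ¬ a = ⟨t, ht⟩ := by
            intro hc
            have : (a:ℕ) = t := by rw [hc]
            omega
          rw [if_pos h2, if_neg ha, zero_mul, add_zero, if_pos (by omega)]
        · rw [if_neg h2, zero_add, if_neg h2, mul_zero, if_neg (by omega)]

lemma sect_g (r : G n) : (sect σ r).g = r := by
  rw [sect, seqDn_blk_g σ r n le_rfl]
  refine G.ext ?_ ?_ <;> funext x
  · show (if (x:ℕ) < n then r.u x else 0) = r.u x
    rw [if_pos x.isLt]
  · show (if (x.1.2:ℕ) < n then r.v x else 0) = r.v x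
    rw [if_pos x.1.2.isLt]

end Blocks
/-! ### Invariance and absorption of central generators -/

section AbsorbV
variable {n : ℕ} (σ : G n → G n → Circle) [MulT σ]

lemma uc_mul_vE (r : G n) (p q : Fin n) (w : ℤ) (i : Fin n) :
    uc (r * vE p q ^ w) i = uc r i := by
  rw [uc_mul, uc_vE_zpow, add_zero]

lemma vc_mul_vE (r : G n) (p q : Fin n) (w : ℤ) {j k : Fin n} (h : j < k) :
    vc (r * vE p q ^ w) j k = vc r j k + (if (j, k) = (p, q) then w else 0) := by
  rw [vc_mul _ _ h, vc_vE_zpow _ _ _ h, uc_vE_zpow, mul_zero, add_zero]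

lemma uc_mul_uE (r : G n) (m : Fin n) (c : ℤ) (i : Fin n) :
    uc (r * uE m ^ c) i = uc r i + (if i = m then c else 0) := by
  rw [uc_mul, uc_uE_zpow]

lemma vc_mul_uE (r : G n) (m : Fin n) (c : ℤ) {j k : Fin n} (h : j < k) :
    vc (r * uE m ^ c) j k = vc r j k + uc r j * (if k = m then c else 0) := by
  rw [vc_mul _ _ h, vc_uE_zpow, add_zero, uc_uE_zpow]

lemma blk_vE (r : G n) (p q : Fin n) (w : ℤ) (k : Fin n) (hk : k ≠ q) :
    blk σ (r * vE p q ^ w) k = blk σ r k := by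
  unfold blk Bblk
  rw [uc_mul_vE]
  congr 1
  refine seqUp_congr σ (fun j => ?_) n
  congr 1
  by_cases hj : j < k
  · rw [vc_mul_vE r p q w hj, if_neg, add_zero]
    intro hc
    exact hk (congrArg Prod.snd hc)
  · rw [vc_of_not_lt _ hj, vc_of_not_lt _ hj]

lemma blk_uE (r : G n) (m : Fin n) (c : ℤ) (k : Fin n) (hk : k ≠ m) :
    blk σ (r * uE m ^ c) k = blk σ r k := by
  unfold blk Bblk
  rw [uc_mul_uE, if_neg hk, add_zero]
  congr 1
  refine seqUp_congr σ (fun j => ?_) n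
  congr 1
  by_cases hj : j < k
  · rw [vc_mul_uE r m c hj, if_neg hk, mul_zero, add_zero]
  · rw [vc_of_not_lt _ hj, vc_of_not_lt _ hj]

lemma Bblk_absorb (r : G n) {p q : Fin n} (hpq : p < q) (w : ℤ) :
    Bblk σ r q * BB σ p q ^ w = Bblk σ (r * vE p q ^ w) q := by
  have hg : seqUp σ (fun j => if j = p then BB σ j q ^ w else 1) n = BB σ p q ^ w := by
    rw [seqUp_single σ (fun j => BB σ j q ^ w) p n, if_pos p.isLt]
  have hc : ∀ i j : Fin n, Mv σ (if i = p then BB σ i q ^ w else 1) (BB σ j q ^ (vc r j q)) 1 := by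
    intro i j
    by_cases hi : i = p
    · rw [if_pos hi]
      have h := mv_zpow₂ σ (mv_BB σ i q j q) w (vc r j q)
      rwa [one_zpow] at h
    · rw [if_neg hi]
      exact mv_one_left σ _
  unfold Bblk
  rw [← hg, seqUp_mul σ hc n]
  refine seqUp_congr σ (fun j => ?_) n
  by_cases hj : j = p
  · subst hj
    rw [if_pos rfl, ← zpow_add]
    congr 1
    rw [vc_mul_vE r j q w hpq, if_pos rfl]
  · rw [if_neg hj, mul_one]
    congr 1
    by_cases hlt : j < q
    · rw [vc_mul_vE r p q w hlt, if_neg (fun hc2 => hj (congrArg Prod.fst hc2)), add_zero]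
    · rw [vc_of_not_lt _ hlt, vc_of_not_lt _ hlt]

lemma blk_absorb (r : G n) {p q : Fin n} (hpq : p < q) (w : ℤ) :
    blk σ r q * BB σ p q ^ w =
      ec σ (lamE σ q p q ^ (uc r q * w)) * blk σ (r * vE p q ^ w) q := by
  have h1 : Mv σ (AA σ q ^ (uc r q)) (BB σ p q ^ w) (lamE σ q p q ^ (uc r q * w)) :=
    mv_zpow₂ σ (mv_AB σ q p q) _ _
  calc blk σ r q * BB σ p q ^ w
      = Bblk σ r q * (AA σ q ^ (uc r q) * BB σ p q ^ w) := by rw [blk, mul_assoc]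
    _ = Bblk σ r q * (ec σ (lamE σ q p q ^ (uc r q * w)) * (BB σ p q ^ w * AA σ q ^ (uc r q))) := by
        rw [h1]
    _ = ec σ (lamE σ q p q ^ (uc r q * w)) * ((Bblk σ r q * BB σ p q ^ w) * AA σ q ^ (uc r q)) := by
        rw [ec_pull]; simp only [mul_assoc]
    _ = ec σ (lamE σ q p q ^ (uc r q * w)) * (Bblk σ (r * vE p q ^ w) q * AA σ q ^ (uc r q)) := by
        rw [Bblk_absorb σ r hpq w]
    _ = ec σ (lamE σ q p q ^ (uc r q * w)) * blk σ (r * vE p q ^ w) q := by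
        rw [blk, uc_mul_vE]

lemma mv_blk_B (r : G n) (k p q : Fin n) (w : ℤ) :
    Mv σ (blk σ r k) (BB σ p q ^ w) (lamE σ k p q ^ (uc r k * w)) := by
  have h1 : Mv σ (Bblk σ r k) (BB σ p q ^ w) 1 := by
    have key := mv_seqUp_left σ (f := fun j => BB σ j k ^ (vc r j k))
      (α := fun _ => (1 : Circle)) (w := BB σ p q ^ w) (fun j => ?_) n
    · rwa [Finset.prod_const_one] at key
    · have := mv_zpow₂ σ (mv_BB σ j k p q) (vc r j k) w
      rwa [one_zpow] at this
  have h2 : Mv σ (AA σ k ^ (uc r k)) (BB σ p q ^ w) (lamE σ k p q ^ (uc r k * w)) :=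
    mv_zpow₂ σ (mv_AB σ k p q) _ _
  have := mv_mul_left σ h1 h2
  rwa [one_mul] at this

lemma absorbV_pass (p q : Fin n) (w : ℤ) (r : G n) (k : ℕ) :
    Mv σ (seqDn σ (blk σ r) k) (BB σ p q ^ w)
      (∏ a ∈ Finset.univ.filter (fun a : Fin n => a.val < k), lamE σ a p q ^ (uc r a * w)) := by
  induction k with
  | zero =>
    rw [filter_lt_zero, Finset.prod_empty]
    exact mv_one_left σ _
  | succ k ih =>
    by_cases hk : k < n
    · rw [seqDn_succ σ _ k hk, filter_lt_succ k hk, Finset.prod_insert (not_mem_filter_lt k hk)]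
      exact mv_mul_left σ (mv_blk_B σ r ⟨k, hk⟩ p q w) ih
    · show Mv σ ((if h : k < n then blk σ r ⟨k, h⟩ else 1) * seqDn σ (blk σ r) k) _ _
      rw [dif_neg hk, one_mul, filter_lt_succ_ge k hk]
      exact ih

lemma absorbV (p q : Fin n) (hpq : p < q) (w : ℤ) (r : G n) :
    ∀ k, q.val + 1 ≤ k → k ≤ n →
    seqDn σ (blk σ r) k * BB σ p q ^ w =
      ec σ (∏ a ∈ Finset.univ.filter (fun a : Fin n => a.val < q.val + 1),
        lamE σ a p q ^ (uc r a * w)) * seqDn σ (blk σ (r * vE p q ^ w)) k := by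
  intro k hk1
  induction k, hk1 using Nat.le_induction with
  | base =>
    intro _
    have hq : q.val < n := q.isLt
    rw [seqDn_succ σ _ q.val hq, filter_lt_succ q.val hq,
      Finset.prod_insert (not_mem_filter_lt q.val hq)]
    have heta : (⟨q.val, hq⟩ : Fin n) = q := Fin.ext rfl
    rw [heta]
    have hpass := absorbV_pass σ p q w r q.val
    calc blk σ r q * seqDn σ (blk σ r) q.val * BB σ p q ^ w
        = blk σ r q * (seqDn σ (blk σ r) q.val * BB σ p q ^ w) := by rw [mul_assoc]
      _ = blk σ r q * (ec σ (∏ a ∈ Finset.univ.filter (fun a : Fin n => a.val < q.val),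
            lamE σ a p q ^ (uc r a * w)) * (BB σ p q ^ w * seqDn σ (blk σ r) q.val)) := by
          rw [hpass]
      _ = ec σ (∏ a ∈ Finset.univ.filter (fun a : Fin n => a.val < q.val),
            lamE σ a p q ^ (uc r a * w)) * ((blk σ r q * BB σ p q ^ w) *
            seqDn σ (blk σ r) q.val) := by
          rw [ec_pull]; simp only [mul_assoc]
      _ = ec σ (∏ a ∈ Finset.univ.filter (fun a : Fin n => a.val < q.val),
            lamE σ a p q ^ (uc r a * w)) * ((ec σ (lamE σ q p q ^ (uc r q * w)) *
            blk σ (r * vE p q ^ w) q) * seqDn σ (blk σ r) q.val) := by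
          rw [blk_absorb σ r hpq w]
      _ = ec σ (lamE σ q p q ^ (uc r q * w) * ∏ a ∈ Finset.univ.filter
            (fun a : Fin n => a.val < q.val), lamE σ a p q ^ (uc r a * w)) *
            (blk σ (r * vE p q ^ w) q * seqDn σ (blk σ r) q.val) := by
          rw [mul_assoc, ec_ec, mul_comm (∏ a ∈ Finset.univ.filter
            (fun a : Fin n => a.val < q.val), lamE σ a p q ^ (uc r a * w))]
      _ = ec σ (lamE σ q p q ^ (uc r q * w) * ∏ a ∈ Finset.univ.filter
            (fun a : Fin n => a.val < q.val), lamE σ a p q ^ (uc r a * w)) *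
            (blk σ (r * vE p q ^ w) q * seqDn σ (blk σ (r * vE p q ^ w)) q.val) := by
          have hDq : seqDn σ (blk σ r) q.val = seqDn σ (blk σ (r * vE p q ^ w)) q.val :=
            seqDn_congr_below σ q.val (fun j hj =>
              (blk_vE σ r p q w j (fun hc => by rw [hc] at hj; omega)).symm)
          rw [hDq]
      _ = ec σ (lamE σ q p q ^ (uc r q * w) * ∏ a ∈ Finset.univ.filter
            (fun a : Fin n => a.val < q.val), lamE σ a p q ^ (uc r a * w)) *
            seqDn σ (blk σ (r * vE p q ^ w)) (q.val + 1) := by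
          rw [seqDn_succ σ _ q.val hq, heta]
  | succ k hk ih =>
    intro hk2
    have hkn : k < n := by omega
    rw [seqDn_succ σ _ k hkn, seqDn_succ σ (blk σ (r * vE p q ^ w)) k hkn, mul_assoc,
      ih (by omega), ec_pull, ← mul_assoc, ← mul_assoc]
    congr 2
    exact (blk_vE σ r p q w ⟨k, hkn⟩ (fun hc => by
      have : k = q.val := congrArg Fin.val hc
      omega)).symm

end AbsorbV
/-! ### Absorption of the generators `u_m` -/

section AbsorbU
variable {n : ℕ} (σ : G n → G n → Circle) [MulT σ]

noncomputable def Wm (r : G n) (m : Fin n) (c : ℤ) (k : ℕ) : Ext σ :=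
  seqUp σ (fun a => BB σ a m ^ (c * uc r a)) k

noncomputable def EU1 (r : G n) (m : Fin n) (c : ℤ) (k : ℕ) : Circle :=
  (∏ p ∈ Finset.univ.filter (fun p : Fin n × Fin n => p.1 < p.2 ∧ p.2.val < k),
    (lamE σ p.1 p.2 m ^ (c * vc r p.1 p.2) *
     lamE σ p.2 p.1 m ^ (c * (uc r p.1 * uc r p.2 - vc r p.1 p.2)))) *
  ∏ a ∈ Finset.univ.filter (fun a : Fin n => a.val < k),
    (lamE σ a a m ^ (c * (uc r a * (uc r a - 1) / 2)) *
     lamE σ m a m ^ (uc r a * (c * (c - 1) / 2)))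

noncomputable def EU2 (r : G n) (m : Fin n) (c : ℤ) : Circle :=
  EU1 σ r m c m.val *
    ∏ a ∈ Finset.univ.filter (fun a : Fin n => a.val < m.val),
      lamE σ m a m ^ (uc r m * (c * uc r a))

lemma tailize {A B S W1 W2 W3 : Ext σ} (h : A * B = S * (W1 * (W2 * W3))) (t : Ext σ) :
    A * (B * t) = S * (W1 * (W2 * (W3 * t))) := by
  have h1 : A * (B * t) = (A * B) * t := by rw [mul_assoc]
  rw [h1, h]
  simp only [mul_assoc]

lemma seqUp_congr_below {f g : Fin n → Ext σ} (k : ℕ) (h : ∀ j : Fin n, j.val < k → f j = g j) :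
    seqUp σ f k = seqUp σ g k := by
  induction k with
  | zero => rfl
  | succ k ih =>
    show seqUp σ f k * _ = seqUp σ g k * _
    rw [ih (fun j hj => h j (by omega))]
    congr 1
    split
    · exact h _ (Nat.lt_succ_self k)
    · rfl

lemma seqUp_stable (f : Fin n → Ext σ) (m' : ℕ) (hf : ∀ j : Fin n, m' ≤ j.val → f j = 1) :
    ∀ k, m' ≤ k → seqUp σ f k = seqUp σ f m' := by
  intro k hk
  induction k, hk using Nat.le_induction with
  | base => rfl
  | succ k hk ih =>
    show seqUp σ f k * _ = _
    rw [ih]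
    by_cases h : k < n
    · rw [dif_pos h, hf ⟨k, h⟩ hk, mul_one]
    · rw [dif_neg h, mul_one]

lemma mv_A_W (r : G n) (kk m : Fin n) (c e : ℤ) (t : ℕ) :
    Mv σ (AA σ kk ^ e) (Wm σ r m c t)
      (∏ a ∈ Finset.univ.filter (fun a : Fin n => a.val < t),
        lamE σ kk a m ^ (e * (c * uc r a))) :=
  mv_seqUp σ (fun a => mv_zpow₂ σ (mv_AB σ kk a m) e (c * uc r a)) t

lemma mv_Bblk_W (r r' : G n) (kk m : Fin n) (c : ℤ) (t : ℕ) :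
    Mv σ (Bblk σ r kk) (Wm σ r' m c t) 1 := by
  have h2 : ∀ j : Fin n, Mv σ (BB σ j kk ^ (vc r j kk)) (Wm σ r' m c t) 1 := by
    intro j
    have h1 : ∀ a : Fin n, Mv σ (BB σ j kk ^ (vc r j kk)) (BB σ a m ^ (c * uc r' a)) 1 := by
      intro a
      have := mv_zpow₂ σ (mv_BB σ j kk a m) (vc r j kk) (c * uc r' a)
      rwa [one_zpow] at this
    have := mv_seqUp σ h1 t
    rwa [Finset.prod_const_one] at this
  have := mv_seqUp_left σ h2 n
  rwa [Finset.prod_const_one] at this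

lemma mv_Bblk_A (r : G n) (kk m : Fin n) (c : ℤ) :
    Mv σ (Bblk σ r kk) (AA σ m ^ c)
      (∏ j ∈ Finset.univ.filter (fun j : Fin n => j.val < n),
        (((lamE σ j kk m)⁻¹ * lamE σ kk j m)⁻¹) ^ (vc r j kk * c)) :=
  mv_seqUp_left σ (fun j => mv_zpow₂ σ (mv_symm σ (jacobi σ j kk m)) (vc r j kk) c) n

lemma pair_filter_lt_zero :
    Finset.univ.filter (fun p : Fin n × Fin n => p.1 < p.2 ∧ p.2.val < 0) = ∅ := by
  ext p; simp

lemma pair_filter_succ_ge (k : ℕ) (h : ¬ k < n) :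
    Finset.univ.filter (fun p : Fin n × Fin n => p.1 < p.2 ∧ p.2.val < k + 1) =
      Finset.univ.filter (fun p : Fin n × Fin n => p.1 < p.2 ∧ p.2.val < k) := by
  ext p
  have := p.2.isLt
  simp only [Finset.mem_filter, Finset.mem_univ, true_and]
  constructor
  · rintro ⟨h1, h2⟩; exact ⟨h1, by omega⟩
  · rintro ⟨h1, h2⟩; exact ⟨h1, by omega⟩

lemma pair_filter_succ (k : ℕ) (hk : k < n) :
    Finset.univ.filter (fun p : Fin n × Fin n => p.1 < p.2 ∧ p.2.val < k + 1) =
      (Finset.univ.filter (fun p : Fin n × Fin n => p.1 < p.2 ∧ p.2.val < k)) ∪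
      (Finset.univ.filter (fun j : Fin n => j.val < k)).image
        (fun j => (j, (⟨k, hk⟩ : Fin n))) := by
  ext p
  rcases p with ⟨a, b⟩
  simp only [Finset.mem_filter, Finset.mem_univ, true_and, Finset.mem_union, Finset.mem_image,
    Prod.mk.injEq, Fin.lt_def]
  constructor
  · rintro ⟨h1, h2⟩
    by_cases hb : (b:ℕ) < k
    · exact Or.inl ⟨h1, hb⟩
    · right
      refine ⟨a, by omega, rfl, (Fin.ext (show (b:ℕ) = k by omega)).symm⟩
  · rintro (⟨h1, h2⟩ | ⟨j, hj, hja, hjb⟩)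
    · exact ⟨h1, by omega⟩
    · subst hja
      subst hjb
      exact ⟨hj, Nat.lt_succ_self k⟩

lemma pair_filter_disj (k : ℕ) (hk : k < n) :
    Disjoint (Finset.univ.filter (fun p : Fin n × Fin n => p.1 < p.2 ∧ p.2.val < k))
      ((Finset.univ.filter (fun j : Fin n => j.val < k)).image
        (fun j => (j, (⟨k, hk⟩ : Fin n)))) := by
  rw [Finset.disjoint_left]
  rintro ⟨a, b⟩ hmem hmem2
  simp only [Finset.mem_filter, Finset.mem_univ, true_and] at hmem
  simp only [Finset.mem_image, Finset.mem_filter, Finset.mem_univ, true_and,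
    Prod.mk.injEq] at hmem2
  obtain ⟨j, hj, hja, hjb⟩ := hmem2
  have : (b:ℕ) = k := by rw [← hjb]
  omega

lemma EU1_zero (r : G n) (m : Fin n) (c : ℤ) : EU1 σ r m c 0 = 1 := by
  rw [EU1, pair_filter_lt_zero, filter_lt_zero, Finset.prod_empty, Finset.prod_empty, mul_one]

set_option maxHeartbeats 1000000 in
lemma EU1_step (r : G n) (m : Fin n) (c : ℤ) (k : ℕ) (hk : k < n) :
    EU1 σ r m c k *
      (∏ a ∈ Finset.univ.filter (fun a : Fin n => a.val < k),
        lamE σ ⟨k, hk⟩ a m ^ (uc r ⟨k, hk⟩ * (c * uc r a))) *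
      (lamE σ ⟨k, hk⟩ ⟨k, hk⟩ m ^ (c * (uc r ⟨k, hk⟩ * (uc r ⟨k, hk⟩ - 1) / 2)) *
        lamE σ m ⟨k, hk⟩ m ^ (uc r ⟨k, hk⟩ * (c * (c - 1) / 2))) *
      (∏ j ∈ Finset.univ.filter (fun j : Fin n => j.val < n),
        (((lamE σ j ⟨k, hk⟩ m)⁻¹ * lamE σ ⟨k, hk⟩ j m)⁻¹) ^ (vc r j ⟨k, hk⟩ * c))
    = EU1 σ r m c (k + 1) := by
  have hshrink : (∏ j ∈ Finset.univ.filter (fun j : Fin n => j.val < n),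
      (((lamE σ j ⟨k, hk⟩ m)⁻¹ * lamE σ ⟨k, hk⟩ j m)⁻¹) ^ (vc r j ⟨k, hk⟩ * c)) =
      ∏ j ∈ Finset.univ.filter (fun j : Fin n => j.val < k),
      (((lamE σ j ⟨k, hk⟩ m)⁻¹ * lamE σ ⟨k, hk⟩ j m)⁻¹) ^ (vc r j ⟨k, hk⟩ * c) := by
    refine (Finset.prod_subset ?_ ?_).symm
    · intro a ha
      simp only [Finset.mem_filter, Finset.mem_univ, true_and] at ha ⊢
      exact a.isLt
    · intro a _ ha
      simp only [Finset.mem_filter, Finset.mem_univ, true_and] at ha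
      have hnlt : ¬ a < (⟨k, hk⟩ : Fin n) := fun hlt => ha hlt
      rw [vc_of_not_lt _ hnlt, zero_mul, zpow_zero]
  symm
  rw [EU1, pair_filter_succ k hk, Finset.prod_union (pair_filter_disj k hk),
    filter_lt_succ k hk, Finset.prod_insert (not_mem_filter_lt k hk)]
  have himg : (∏ p ∈ (Finset.univ.filter (fun j : Fin n => j.val < k)).image
      (fun j => (j, (⟨k, hk⟩ : Fin n))),
      (lamE σ p.1 p.2 m ^ (c * vc r p.1 p.2) *
       lamE σ p.2 p.1 m ^ (c * (uc r p.1 * uc r p.2 - vc r p.1 p.2)))) =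
      ∏ j ∈ Finset.univ.filter (fun j : Fin n => j.val < k),
        (lamE σ ⟨k, hk⟩ j m ^ (uc r ⟨k, hk⟩ * (c * uc r j)) *
         (((lamE σ j ⟨k, hk⟩ m)⁻¹ * lamE σ ⟨k, hk⟩ j m)⁻¹) ^ (vc r j ⟨k, hk⟩ * c)) := by
    rw [Finset.prod_image (fun x _ y _ h => congrArg Prod.fst h)]
    refine Finset.prod_congr rfl (fun j hj => ?_)
    show lamE σ j ⟨k, hk⟩ m ^ (c * vc r j ⟨k, hk⟩) *
        lamE σ ⟨k, hk⟩ j m ^ (c * (uc r j * uc r ⟨k, hk⟩ - vc r j ⟨k, hk⟩)) = _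
    rw [mul_inv_rev, inv_inv, mul_zpow, inv_zpow, ← zpow_neg,
      show lamE σ ⟨k, hk⟩ j m ^ (uc r ⟨k, hk⟩ * (c * uc r j)) *
        (lamE σ ⟨k, hk⟩ j m ^ (-(vc r j ⟨k, hk⟩ * c)) *
         lamE σ j ⟨k, hk⟩ m ^ (vc r j ⟨k, hk⟩ * c)) =
        lamE σ j ⟨k, hk⟩ m ^ (vc r j ⟨k, hk⟩ * c) *
        (lamE σ ⟨k, hk⟩ j m ^ (uc r ⟨k, hk⟩ * (c * uc r j)) *
         lamE σ ⟨k, hk⟩ j m ^ (-(vc r j ⟨k, hk⟩ * c))) from by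
      simp only [mul_comm, mul_left_comm, mul_assoc], ← zpow_add]
    congr 2
    · ring
    · ring
  rw [himg, EU1, hshrink, Finset.prod_mul_distrib]
  simp only [mul_comm, mul_left_comm, mul_assoc]
  rw [Finset.prod_mul_distrib, mul_assoc]

lemma absorbU_pass (m : Fin n) (c : ℤ) (r : G n) : ∀ k,
    seqDn σ (blk σ r) k * AA σ m ^ c =
      ec σ (EU1 σ r m c k) * (Wm σ r m c k * (AA σ m ^ c * seqDn σ (blk σ r) k)) := by
  intro k
  induction k with
  | zero =>
    show (1 : Ext σ) * AA σ m ^ c = ec σ (EU1 σ r m c 0) * ((1 : Ext σ) * (AA σ m ^ c * 1))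
    rw [EU1_zero, ec_one, one_mul, one_mul, one_mul, mul_one]
  | succ k ih =>
    by_cases hk : k < n
    · set kk : Fin n := ⟨k, hk⟩ with hkk
      have hxy : AA σ kk * AA σ m = BB σ kk m * (AA σ m * AA σ kk) := by
        show _ = ⁅AA σ kk, AA σ m⁆ * _
        rw [commutatorElement_def]
        group
      have hswap := swap σ hxy (mv_AB σ kk kk m) (mv_AB σ m kk m) (uc r kk) c
      calc seqDn σ (blk σ r) (k+1) * AA σ m ^ c
          = blk σ r kk * (seqDn σ (blk σ r) k * AA σ m ^ c) := by
            rw [seqDn_succ σ _ k hk, mul_assoc]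
        _ = blk σ r kk * (ec σ (EU1 σ r m c k) *
              (Wm σ r m c k * (AA σ m ^ c * seqDn σ (blk σ r) k))) := by rw [ih]
        _ = ec σ (EU1 σ r m c k) * (Bblk σ r kk * (AA σ kk ^ (uc r kk) *
              (Wm σ r m c k * (AA σ m ^ c * seqDn σ (blk σ r) k)))) := by
            rw [ec_pull, blk]
            simp only [mul_assoc]
        _ = ec σ (EU1 σ r m c k) * (ec σ (∏ a ∈ Finset.univ.filter
              (fun a : Fin n => a.val < k), lamE σ kk a m ^ (uc r kk * (c * uc r a))) *
              (Bblk σ r kk * (Wm σ r m c k * (AA σ kk ^ (uc r kk) *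
                (AA σ m ^ c * seqDn σ (blk σ r) k))))) := by
            rw [mv_step σ (mv_A_W σ r kk m c (uc r kk) k), ec_pull σ _ (Bblk σ r kk)]
        _ = ec σ (EU1 σ r m c k) * (ec σ (∏ a ∈ Finset.univ.filter
              (fun a : Fin n => a.val < k), lamE σ kk a m ^ (uc r kk * (c * uc r a))) *
              (ec σ (lamE σ kk kk m ^ (c * (uc r kk * (uc r kk - 1) / 2)) *
                     lamE σ m kk m ^ (uc r kk * (c * (c - 1) / 2))) *
              (Bblk σ r kk * (Wm σ r m c k * (BB σ kk m ^ (uc r kk * c) *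
                (AA σ m ^ c * (AA σ kk ^ (uc r kk) * seqDn σ (blk σ r) k))))))) := by
            rw [tailize σ hswap (seqDn σ (blk σ r) k), ec_pull σ _ (Wm σ r m c k),
              ec_pull σ _ (Bblk σ r kk)]
        _ = ec σ (EU1 σ r m c k) * (ec σ (∏ a ∈ Finset.univ.filter
              (fun a : Fin n => a.val < k), lamE σ kk a m ^ (uc r kk * (c * uc r a))) *
              (ec σ (lamE σ kk kk m ^ (c * (uc r kk * (uc r kk - 1) / 2)) *
                     lamE σ m kk m ^ (uc r kk * (c * (c - 1) / 2))) *
              (Bblk σ r kk * (Wm σ r m c (k+1) *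
                (AA σ m ^ c * (AA σ kk ^ (uc r kk) * seqDn σ (blk σ r) k)))))) := by
            rw [show Wm σ r m c k * (BB σ kk m ^ (uc r kk * c) *
                (AA σ m ^ c * (AA σ kk ^ (uc r kk) * seqDn σ (blk σ r) k))) =
                (Wm σ r m c k * BB σ kk m ^ (uc r kk * c)) *
                (AA σ m ^ c * (AA σ kk ^ (uc r kk) * seqDn σ (blk σ r) k)) from by
              rw [mul_assoc]]
            congr 3
            rw [show Wm σ r m c (k+1) = Wm σ r m c k * BB σ kk m ^ (c * uc r kk) from
              seqUp_succ σ _ k hk]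
            rw [mul_comm (uc r kk) c]
        _ = ec σ (EU1 σ r m c k) * (ec σ (∏ a ∈ Finset.univ.filter
              (fun a : Fin n => a.val < k), lamE σ kk a m ^ (uc r kk * (c * uc r a))) *
              (ec σ (lamE σ kk kk m ^ (c * (uc r kk * (uc r kk - 1) / 2)) *
                     lamE σ m kk m ^ (uc r kk * (c * (c - 1) / 2))) *
              (ec σ (∏ j ∈ Finset.univ.filter (fun j : Fin n => j.val < n),
                  (((lamE σ j kk m)⁻¹ * lamE σ kk j m)⁻¹) ^ (vc r j kk * c)) *
              (Wm σ r m c (k+1) *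
                (AA σ m ^ c * (Bblk σ r kk * (AA σ kk ^ (uc r kk) * seqDn σ (blk σ r) k))))))) := by
            rw [mv_step σ (mv_Bblk_W σ r r kk m c (k+1)), ec_one, one_mul,
              mv_step σ (mv_Bblk_A σ r kk m c), ec_pull σ _ (Wm σ r m c (k+1))]
        _ = ec σ (EU1 σ r m c (k+1)) * (Wm σ r m c (k+1) *
              (AA σ m ^ c * seqDn σ (blk σ r) (k+1))) := by
            rw [ec_ec, ec_ec, ec_ec, EU1_step σ r m c k hk]
            congr 3
            rw [seqDn_succ σ _ k hk, blk]
            simp only [mul_assoc]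
            rfl
    · have hD : seqDn σ (blk σ r) (k+1) = seqDn σ (blk σ r) k := by
        show (_ : Ext σ) * _ = _
        rw [dif_neg hk, one_mul]
      have hW : Wm σ r m c (k+1) = Wm σ r m c k := by
        show (seqUp σ _ k : Ext σ) * _ = Wm σ r m c k
        rw [dif_neg hk, mul_one]
        rfl
      have hEU : EU1 σ r m c (k+1) = EU1 σ r m c k := by
        rw [EU1, EU1, pair_filter_succ_ge k hk, filter_lt_succ_ge k hk]
      rw [hD, hW, hEU]
      exact ih

end AbsorbU
/-! ### Full absorption of `u_m` powers -/

section AbsorbU2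
variable {n : ℕ} (σ : G n → G n → Circle) [MulT σ]

lemma Bblk_W_merge (r : G n) (m : Fin n) (c : ℤ) :
    Bblk σ r m * Wm σ r m c m.val = Bblk σ (r * uE m ^ c) m := by
  have hm : m.val < n := m.isLt
  have hstable1 : Bblk σ r m = seqUp σ (fun j => BB σ j m ^ (vc r j m)) m.val :=
    seqUp_stable σ _ m.val (fun j hj => by
      rw [vc_of_not_lt _ (fun hlt => by have : (j:ℕ) < m.val := hlt; omega), zpow_zero]) n hm.le
  have hstable2 : Bblk σ (r * uE m ^ c) m =
      seqUp σ (fun j => BB σ j m ^ (vc (r * uE m ^ c) j m)) m.val :=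
    seqUp_stable σ _ m.val (fun j hj => by
      rw [vc_of_not_lt _ (fun hlt => by have : (j:ℕ) < m.val := hlt; omega), zpow_zero]) n hm.le
  have hc : ∀ i j : Fin n, Mv σ (BB σ i m ^ (c * uc r i)) (BB σ j m ^ (vc r j m)) 1 := by
    intro i j
    have := mv_zpow₂ σ (mv_BB σ i m j m) (c * uc r i) (vc r j m)
    rwa [one_zpow] at this
  rw [hstable1, hstable2, Wm, seqUp_mul σ hc m.val]
  refine seqUp_congr_below σ m.val (fun j hj => ?_)
  have hjm : j < m := hj
  rw [← zpow_add, vc_mul_uE r m c hjm, if_pos rfl]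
  congr 1
  ring

lemma absorbU (m : Fin n) (c : ℤ) (r : G n) : ∀ k, m.val + 1 ≤ k → k ≤ n →
    seqDn σ (blk σ r) k * AA σ m ^ c =
      ec σ (EU2 σ r m c) * seqDn σ (blk σ (r * uE m ^ c)) k := by
  intro k hk1
  induction k, hk1 using Nat.le_induction with
  | base =>
    intro _
    have hm : m.val < n := m.isLt
    have heta : (⟨m.val, hm⟩ : Fin n) = m := Fin.ext rfl
    rw [seqDn_succ σ _ m.val hm, heta, seqDn_succ σ (blk σ (r * uE m ^ c)) m.val hm, heta]
    calc blk σ r m * seqDn σ (blk σ r) m.val * AA σ m ^ c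
        = blk σ r m * (seqDn σ (blk σ r) m.val * AA σ m ^ c) := by rw [mul_assoc]
      _ = blk σ r m * (ec σ (EU1 σ r m c m.val) * (Wm σ r m c m.val *
            (AA σ m ^ c * seqDn σ (blk σ r) m.val))) := by rw [absorbU_pass σ m c r m.val]
      _ = ec σ (EU1 σ r m c m.val) * (Bblk σ r m * (AA σ m ^ (uc r m) * (Wm σ r m c m.val *
            (AA σ m ^ c * seqDn σ (blk σ r) m.val)))) := by
          rw [ec_pull, blk]; simp only [mul_assoc]
      _ = ec σ (EU1 σ r m c m.val) * (ec σ (∏ a ∈ Finset.univ.filter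
            (fun a : Fin n => a.val < m.val), lamE σ m a m ^ (uc r m * (c * uc r a))) *
            (Bblk σ r m * (Wm σ r m c m.val * (AA σ m ^ (uc r m) *
              (AA σ m ^ c * seqDn σ (blk σ r) m.val))))) := by
          rw [mv_step σ (mv_A_W σ r m m c (uc r m) m.val), ec_pull σ _ (Bblk σ r m)]
      _ = ec σ (EU2 σ r m c) * ((Bblk σ r m * Wm σ r m c m.val) * (AA σ m ^ (uc r m + c) *
            seqDn σ (blk σ r) m.val)) := by
          rw [ec_ec, EU2, pow_pow_pull]
          simp only [mul_assoc]
      _ = ec σ (EU2 σ r m c) * (blk σ (r * uE m ^ c) m *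
            seqDn σ (blk σ (r * uE m ^ c)) m.val) := by
          rw [Bblk_W_merge σ r m c, blk, mul_assoc]
          congr 3
          · rw [uc_mul_uE, if_pos rfl]
          · exact seqDn_congr_below σ m.val (fun j hj => (blk_uE σ r m c j (fun hc2 => by
              have : (j:ℕ) = m.val := congrArg Fin.val hc2
              omega)).symm)
  | succ k hk ih =>
    intro hk2
    have hkn : k < n := by omega
    rw [seqDn_succ σ _ k hkn, seqDn_succ σ (blk σ (r * uE m ^ c)) k hkn, mul_assoc,
      ih (by omega), ec_pull, ← mul_assoc, ← mul_assoc]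
    congr 2
    exact (blk_uE σ r m c ⟨k, hkn⟩ (fun hc2 => by
      have : k = m.val := congrArg Fin.val hc2
      omega)).symm

lemma absorbU_full (m : Fin n) (c : ℤ) (r : G n) :
    sect σ r * AA σ m ^ c = ec σ (EU2 σ r m c) * sect σ (r * uE m ^ c) :=
  absorbU σ m c r n m.isLt le_rfl

lemma absorbV_full (p q : Fin n) (hpq : p < q) (w : ℤ) (r : G n) :
    sect σ r * BB σ p q ^ w =
      ec σ (∏ a ∈ Finset.univ.filter (fun a : Fin n => a.val < q.val + 1),
        lamE σ a p q ^ (uc r a * w)) * sect σ (r * vE p q ^ w) :=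
  absorbV σ p q hpq w r n q.isLt le_rfl

end AbsorbU2
/-! ### Evaluation and cocycle property of `sigmaLam` -/

section SigmaLamLemmas
variable {n : ℕ} (σ : G n → G n → Circle) [MulT σ]

lemma sigmaLam_one_right (lam : Fin n → Fin n → Fin n → Circle) (r : G n) :
    sigmaLam lam r 1 = 1 := by
  unfold sigmaLam
  have h1 : ∀ t ∈ Finset.univ.filter
      (fun t : Fin n × Fin n × Fin n => t.1 < t.2.1 ∧ t.2.1 < t.2.2),
      lam t.1 t.2.1 t.2.2 ^ (vc (1:G n) t.2.1 t.2.2 * uc r t.1 + uc (1:G n) t.2.2 * vc r t.1 t.2.1) *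
      lam t.2.1 t.1 t.2.2 ^ (vc (1:G n) t.1 t.2.2 * uc r t.2.1 +
        uc (1:G n) t.2.2 * (uc r t.1 * uc r t.2.1 - vc r t.1 t.2.1)) = 1 := by
    intro t _
    simp [vc_one, uc_one]
  have h2 : ∀ p ∈ Finset.univ.filter (fun p : Fin n × Fin n => p.1 < p.2),
      lam p.1 p.1 p.2 ^ (vc (1:G n) p.1 p.2 * uc r p.1 +
        uc (1:G n) p.2 * (uc r p.1 * (uc r p.1 - 1) / 2)) *
      lam p.2 p.1 p.2 ^ (uc r p.2 * (vc (1:G n) p.1 p.2 + uc r p.1 * uc (1:G n) p.2) +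
        uc r p.1 * (uc (1:G n) p.2 * (uc (1:G n) p.2 - 1) / 2)) = 1 := by
    intro p _
    simp [vc_one, uc_one]
  rw [Finset.prod_eq_one h1, Finset.prod_eq_one h2, mul_one]

lemma sigmaLam_uE (r : G n) (m : Fin n) (c : ℤ) :
    sigmaLam (lamE σ) r (uE m ^ c) = EU2 σ r m c := by
  unfold sigmaLam EU2 EU1
  have hT1 : ∀ t ∈ Finset.univ.filter
      (fun t : Fin n × Fin n × Fin n => t.1 < t.2.1 ∧ t.2.1 < t.2.2),
      lamE σ t.1 t.2.1 t.2.2 ^ (vc ((uE m : G n) ^ c) t.2.1 t.2.2 * uc r t.1 +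
        uc ((uE m : G n) ^ c) t.2.2 * vc r t.1 t.2.1) *
      lamE σ t.2.1 t.1 t.2.2 ^ (vc ((uE m : G n) ^ c) t.1 t.2.2 * uc r t.2.1 +
        uc ((uE m : G n) ^ c) t.2.2 * (uc r t.1 * uc r t.2.1 - vc r t.1 t.2.1)) =
      if t.2.2 = m then
        lamE σ t.1 t.2.1 m ^ (c * vc r t.1 t.2.1) *
        lamE σ t.2.1 t.1 m ^ (c * (uc r t.1 * uc r t.2.1 - vc r t.1 t.2.1))
      else 1 := by
    intro t _
    rw [vc_uE_zpow, vc_uE_zpow, uc_uE_zpow, zero_mul, zero_mul, zero_add, zero_add]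
    by_cases h : t.2.2 = m
    · rw [if_pos h, if_pos h, h]
    · rw [if_neg h, if_neg h, zero_mul, zero_mul, zpow_zero, zpow_zero, mul_one]
  have hT2 : ∀ p ∈ Finset.univ.filter (fun p : Fin n × Fin n => p.1 < p.2),
      lamE σ p.1 p.1 p.2 ^ (vc ((uE m : G n) ^ c) p.1 p.2 * uc r p.1 +
        uc ((uE m : G n) ^ c) p.2 * (uc r p.1 * (uc r p.1 - 1) / 2)) *
      lamE σ p.2 p.1 p.2 ^ (uc r p.2 * (vc ((uE m : G n) ^ c) p.1 p.2 +
        uc r p.1 * uc ((uE m : G n) ^ c) p.2) +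
        uc r p.1 * (uc ((uE m : G n) ^ c) p.2 * (uc ((uE m : G n) ^ c) p.2 - 1) / 2)) =
      if p.2 = m then
        lamE σ p.1 p.1 m ^ (c * (uc r p.1 * (uc r p.1 - 1) / 2)) *
        lamE σ m p.1 m ^ (uc r p.1 * (c * (c - 1) / 2) + uc r m * (c * uc r p.1))
      else 1 := by
    intro p _
    rw [vc_uE_zpow, uc_uE_zpow]
    by_cases h : p.2 = m
    · rw [if_pos h, if_pos h, h]
      congr 1
      · congr 1; ring
      · congr 1; ring
    · rw [if_neg h, if_neg h]
      norm_num
  rw [Finset.prod_congr rfl hT1, Finset.prod_congr rfl hT2, ← Finset.prod_filter,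
    ← Finset.prod_filter]
  have hbij : (∏ t ∈ (Finset.univ.filter
      (fun t : Fin n × Fin n × Fin n => t.1 < t.2.1 ∧ t.2.1 < t.2.2)).filter
      (fun t => t.2.2 = m),
      (lamE σ t.1 t.2.1 m ^ (c * vc r t.1 t.2.1) *
       lamE σ t.2.1 t.1 m ^ (c * (uc r t.1 * uc r t.2.1 - vc r t.1 t.2.1)))) =
      ∏ p ∈ Finset.univ.filter (fun p : Fin n × Fin n => p.1 < p.2 ∧ p.2.val < m.val),
      (lamE σ p.1 p.2 m ^ (c * vc r p.1 p.2) *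
       lamE σ p.2 p.1 m ^ (c * (uc r p.1 * uc r p.2 - vc r p.1 p.2))) := by
    refine Finset.prod_nbij' (fun t => (t.1, t.2.1)) (fun p => (p.1, p.2, m)) ?_ ?_ ?_ ?_ ?_
    · intro t ht
      simp only [Finset.mem_filter, Finset.mem_univ, true_and] at ht ⊢
      obtain ⟨⟨h1, h2⟩, h3⟩ := ht
      subst h3
      exact ⟨h1, h2⟩
    · intro p hp
      simp only [Finset.mem_filter, Finset.mem_univ, true_and] at hp ⊢
      exact ⟨⟨hp.1, hp.2⟩, trivial⟩
    · intro t ht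
      simp only [Finset.mem_filter, Finset.mem_univ, true_and] at ht
      obtain ⟨-, h3⟩ := ht
      rw [← h3]
    · intro p _
      rfl
    · intro t _
      rfl
  have hbij2 : (∏ p ∈ (Finset.univ.filter
      (fun p : Fin n × Fin n => p.1 < p.2)).filter (fun p => p.2 = m),
      (lamE σ p.1 p.1 m ^ (c * (uc r p.1 * (uc r p.1 - 1) / 2)) *
       lamE σ m p.1 m ^ (uc r p.1 * (c * (c - 1) / 2) + uc r m * (c * uc r p.1)))) =
      ∏ a ∈ Finset.univ.filter (fun a : Fin n => a.val < m.val),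
      (lamE σ a a m ^ (c * (uc r a * (uc r a - 1) / 2)) *
       lamE σ m a m ^ (uc r a * (c * (c - 1) / 2) + uc r m * (c * uc r a))) := by
    refine Finset.prod_nbij' (fun p => p.1) (fun a => (a, m)) ?_ ?_ ?_ ?_ ?_
    · intro p hp
      simp only [Finset.mem_filter, Finset.mem_univ, true_and] at hp ⊢
      obtain ⟨h1, h2⟩ := hp
      subst h2
      exact h1
    · intro a ha
      simp only [Finset.mem_filter, Finset.mem_univ, true_and] at ha ⊢
      exact ⟨ha, trivial⟩
    · intro p hp
      simp only [Finset.mem_filter, Finset.mem_univ, true_and] at hp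
      obtain ⟨-, h2⟩ := hp
      rw [← h2]
    · intro a _
      rfl
    · intro t _
      rfl
  rw [hbij, hbij2]
  rw [show (∏ a ∈ Finset.univ.filter (fun a : Fin n => a.val < m.val),
      (lamE σ a a m ^ (c * (uc r a * (uc r a - 1) / 2)) *
       lamE σ m a m ^ (uc r a * (c * (c - 1) / 2) + uc r m * (c * uc r a)))) =
      (∏ a ∈ Finset.univ.filter (fun a : Fin n => a.val < m.val),
      (lamE σ a a m ^ (c * (uc r a * (uc r a - 1) / 2)) *
       lamE σ m a m ^ (uc r a * (c * (c - 1) / 2)))) *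
      ∏ a ∈ Finset.univ.filter (fun a : Fin n => a.val < m.val),
        lamE σ m a m ^ (uc r m * (c * uc r a)) from by
    rw [← Finset.prod_mul_distrib]
    refine Finset.prod_congr rfl (fun a _ => ?_)
    rw [zpow_add]
    simp only [mul_comm, mul_left_comm, mul_assoc]]
  rw [mul_assoc]

lemma sigmaLam_vE (r : G n) {p q : Fin n} (hpq : p < q) (w : ℤ) :
    sigmaLam (lamE σ) r (vE p q ^ w) =
      ∏ a ∈ Finset.univ.filter (fun a : Fin n => a.val < q.val + 1),
        lamE σ a p q ^ (uc r a * w) := by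
  have hpq' : p.val < q.val := hpq
  unfold sigmaLam
  have hT1 : ∀ t ∈ Finset.univ.filter
      (fun t : Fin n × Fin n × Fin n => t.1 < t.2.1 ∧ t.2.1 < t.2.2),
      lamE σ t.1 t.2.1 t.2.2 ^ (vc ((vE p q : G n) ^ w) t.2.1 t.2.2 * uc r t.1 +
        uc ((vE p q : G n) ^ w) t.2.2 * vc r t.1 t.2.1) *
      lamE σ t.2.1 t.1 t.2.2 ^ (vc ((vE p q : G n) ^ w) t.1 t.2.2 * uc r t.2.1 +
        uc ((vE p q : G n) ^ w) t.2.2 * (uc r t.1 * uc r t.2.1 - vc r t.1 t.2.1)) =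
      (if (t.2.1, t.2.2) = (p, q) then lamE σ t.1 p q ^ (uc r t.1 * w) else 1) *
      (if (t.1, t.2.2) = (p, q) then lamE σ t.2.1 p q ^ (uc r t.2.1 * w) else 1) := by
    intro t ht
    simp only [Finset.mem_filter, Finset.mem_univ, true_and] at ht
    obtain ⟨h1, h2⟩ := ht
    rw [uc_vE_zpow, vc_vE_zpow _ _ _ h2, vc_vE_zpow _ _ _ (h1.trans h2), zero_mul, add_zero,
      zero_mul, add_zero]
    congr 1
    · by_cases hc : (t.2.1, t.2.2) = (p, q)
      · rw [if_pos hc, if_pos hc, show t.2.1 = p from congrArg Prod.fst hc,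
          show t.2.2 = q from congrArg Prod.snd hc, mul_comm w (uc r t.1)]
      · rw [if_neg hc, if_neg hc, zero_mul, zpow_zero]
    · by_cases hc : (t.1, t.2.2) = (p, q)
      · rw [if_pos hc, if_pos hc, show t.1 = p from congrArg Prod.fst hc,
          show t.2.2 = q from congrArg Prod.snd hc, mul_comm w (uc r t.2.1)]
      · rw [if_neg hc, if_neg hc, zero_mul, zpow_zero]
  have hT2 : ∀ x ∈ Finset.univ.filter (fun x : Fin n × Fin n => x.1 < x.2),
      lamE σ x.1 x.1 x.2 ^ (vc ((vE p q : G n) ^ w) x.1 x.2 * uc r x.1 +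
        uc ((vE p q : G n) ^ w) x.2 * (uc r x.1 * (uc r x.1 - 1) / 2)) *
      lamE σ x.2 x.1 x.2 ^ (uc r x.2 * (vc ((vE p q : G n) ^ w) x.1 x.2 +
        uc r x.1 * uc ((vE p q : G n) ^ w) x.2) +
        uc r x.1 * (uc ((vE p q : G n) ^ w) x.2 * (uc ((vE p q : G n) ^ w) x.2 - 1) / 2)) =
      if (x.1, x.2) = (p, q) then
        (lamE σ p p q ^ (uc r p * w) * lamE σ q p q ^ (uc r q * w)) else 1 := by
    intro x hx
    simp only [Finset.mem_filter, Finset.mem_univ, true_and] at hx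
    rw [uc_vE_zpow, vc_vE_zpow _ _ _ hx]
    by_cases hc : (x.1, x.2) = (p, q)
    · rw [if_pos hc, if_pos hc, show x.1 = p from congrArg Prod.fst hc,
        show x.2 = q from congrArg Prod.snd hc]
      congr 1
      · congr 1
        norm_num [mul_comm]
      · congr 1
        norm_num
    · rw [if_neg hc, if_neg hc]
      norm_num
  rw [Finset.prod_congr rfl hT1, Finset.prod_congr rfl hT2, Finset.prod_mul_distrib,
    ← Finset.prod_filter, ← Finset.prod_filter, ← Finset.prod_filter]
  have hbijA : (∏ t ∈ (Finset.univ.filter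
      (fun t : Fin n × Fin n × Fin n => t.1 < t.2.1 ∧ t.2.1 < t.2.2)).filter
      (fun t => (t.2.1, t.2.2) = (p, q)),
      lamE σ t.1 p q ^ (uc r t.1 * w)) =
      ∏ a ∈ Finset.univ.filter (fun a : Fin n => a.val < p.val),
        lamE σ a p q ^ (uc r a * w) := by
    refine Finset.prod_nbij' (fun t => t.1) (fun a => (a, p, q)) ?_ ?_ ?_ ?_ ?_
    · intro t ht
      simp only [Finset.mem_filter, Finset.mem_univ, true_and] at ht ⊢
      obtain ⟨⟨hh1, hh2⟩, hc⟩ := ht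
      have he : t.2.1 = p := congrArg Prod.fst hc
      rw [he] at hh1
      exact hh1
    · intro a ha
      simp only [Finset.mem_filter, Finset.mem_univ, true_and] at ha ⊢
      exact ⟨⟨ha, hpq⟩, trivial⟩
    · intro t ht
      simp only [Finset.mem_filter, Finset.mem_univ, true_and] at ht
      obtain ⟨-, hc⟩ := ht
      rw [← show t.2.1 = p from congrArg Prod.fst hc, ← show t.2.2 = q from congrArg Prod.snd hc]
    · intro a _
      rfl
    · intro t _
      rfl
  have hbijB : (∏ t ∈ (Finset.univ.filter
      (fun t : Fin n × Fin n × Fin n => t.1 < t.2.1 ∧ t.2.1 < t.2.2)).filter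
      (fun t => (t.1, t.2.2) = (p, q)),
      lamE σ t.2.1 p q ^ (uc r t.2.1 * w)) =
      ∏ a ∈ Finset.univ.filter (fun a : Fin n => p.val < a.val ∧ a.val < q.val),
        lamE σ a p q ^ (uc r a * w) := by
    refine Finset.prod_nbij' (fun t => t.2.1) (fun a => (p, a, q)) ?_ ?_ ?_ ?_ ?_
    · intro t ht
      simp only [Finset.mem_filter, Finset.mem_univ, true_and] at ht ⊢
      obtain ⟨⟨hh1, hh2⟩, hc⟩ := ht
      have he1 : t.1 = p := congrArg Prod.fst hc
      have he2 : t.2.2 = q := congrArg Prod.snd hc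
      rw [he1] at hh1
      rw [he2] at hh2
      exact ⟨hh1, hh2⟩
    · intro a ha
      simp only [Finset.mem_filter, Finset.mem_univ, true_and] at ha ⊢
      exact ⟨⟨ha.1, ha.2⟩, trivial⟩
    · intro t ht
      simp only [Finset.mem_filter, Finset.mem_univ, true_and] at ht
      obtain ⟨-, hc⟩ := ht
      rw [← show t.1 = p from congrArg Prod.fst hc, ← show t.2.2 = q from congrArg Prod.snd hc]
    · intro a _
      rfl
    · intro t _
      rfl
  have hsingle : (Finset.univ.filter (fun x : Fin n × Fin n => x.1 < x.2)).filter
      (fun x => (x.1, x.2) = (p, q)) = {(p, q)} := by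
    ext x
    simp only [Finset.mem_filter, Finset.mem_univ, true_and, Finset.mem_singleton]
    constructor
    · rintro ⟨-, h⟩
      exact h
    · rintro rfl
      exact ⟨hpq, rfl⟩
  rw [hbijA, hbijB, hsingle, Finset.prod_singleton]
  have hsplit : Finset.univ.filter (fun a : Fin n => a.val < q.val + 1) =
      (Finset.univ.filter (fun a : Fin n => a.val < p.val) ∪
       Finset.univ.filter (fun a : Fin n => p.val < a.val ∧ a.val < q.val)) ∪ {p, q} := by
    ext a
    simp only [Finset.mem_filter, Finset.mem_univ, true_and, Finset.mem_union,
      Finset.mem_insert, Finset.mem_singleton, Fin.ext_iff]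
    omega
  have hd1 : Disjoint (Finset.univ.filter (fun a : Fin n => a.val < p.val))
      (Finset.univ.filter (fun a : Fin n => p.val < a.val ∧ a.val < q.val)) := by
    rw [Finset.disjoint_left]
    intro a ha hb
    simp only [Finset.mem_filter, Finset.mem_univ, true_and] at ha hb
    omega
  have hd2 : Disjoint ((Finset.univ.filter (fun a : Fin n => a.val < p.val) ∪
       Finset.univ.filter (fun a : Fin n => p.val < a.val ∧ a.val < q.val)))
      ({p, q} : Finset (Fin n)) := by
    rw [Finset.disjoint_left]
    intro a ha hb
    simp only [Finset.mem_union, Finset.mem_filter, Finset.mem_univ, true_and] at ha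
    simp only [Finset.mem_insert, Finset.mem_singleton, Fin.ext_iff] at hb
    omega
  have hne : p ≠ q := Fin.ne_of_lt hpq
  rw [hsplit, Finset.prod_union hd2, Finset.prod_union hd1, Finset.prod_pair hne]

lemma sigmaLam_cocycle (lam : Fin n → Fin n → Fin n → Circle) (r s t : G n) :
    sigmaLam lam r s * sigmaLam lam (r * s) t = sigmaLam lam r (s * t) * sigmaLam lam s t := by
  unfold sigmaLam
  conv_lhs => rw [mul_mul_mul_comm]
  conv_rhs => rw [mul_mul_mul_comm]
  rw [← Finset.prod_mul_distrib, ← Finset.prod_mul_distrib, ← Finset.prod_mul_distrib,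
    ← Finset.prod_mul_distrib]
  congr 1
  · refine Finset.prod_congr rfl (fun x hx => ?_)
    simp only [Finset.mem_filter, Finset.mem_univ, true_and] at hx
    obtain ⟨h1, h2⟩ := hx
    rw [mul_mul_mul_comm, ← zpow_add, ← zpow_add]
    conv_rhs => rw [mul_mul_mul_comm, ← zpow_add, ← zpow_add]
    congr 1
    · congr 1
      rw [vc_mul r s h1, vc_mul s t h2]
      simp only [uc_mul]
      ring
    · congr 1
      rw [vc_mul r s h1, vc_mul s t (h1.trans h2)]
      simp only [uc_mul]
      ring
  · refine Finset.prod_congr rfl (fun x hx => ?_)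
    simp only [Finset.mem_filter, Finset.mem_univ, true_and] at hx
    rw [mul_mul_mul_comm, ← zpow_add, ← zpow_add]
    conv_rhs => rw [mul_mul_mul_comm, ← zpow_add, ← zpow_add]
    congr 1
    · congr 1
      rw [vc_mul s t hx]
      simp only [uc_mul]
      rw [half_add]
      ring
    · congr 1
      rw [vc_mul s t hx]
      simp only [uc_mul]
      rw [half_add]
      ring

end SigmaLamLemmas
/-! ### Sections of generators, the measure, and the main theorem -/

section MainSec
variable {n : ℕ} (σ : G n → G n → Circle) [MulT σ]

lemma seqUp_ones : ∀ k, seqUp σ (fun _ => (1 : Ext σ)) k = 1 := by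
  intro k
  induction k with
  | zero => rfl
  | succ k ih =>
    show seqUp σ _ k * _ = 1
    rw [ih, one_mul]
    split <;> rfl

lemma seqDn_single (f : Fin n → Ext σ) (p0 : Fin n) (X : Ext σ)
    (hf : ∀ j, f j = if j = p0 then X else 1) :
    ∀ t, seqDn σ f t = if p0.val < t then X else 1 := by
  intro t
  induction t with
  | zero => rw [if_neg (by omega)]; rfl
  | succ t ih =>
    by_cases ht : t < n
    · rw [seqDn_succ σ f t ht, hf, ih]
      by_cases hp : (⟨t, ht⟩ : Fin n) = p0
      · have hpt : p0.val = t := by rw [← hp]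
        rw [if_pos hp, if_neg (by omega), if_pos (by omega), mul_one]
      · have hpt : p0.val ≠ t := fun hc => hp (Fin.ext (by simp [hc]))
        rw [if_neg hp, one_mul]
        by_cases h2 : p0.val < t
        · rw [if_pos h2, if_pos (by omega)]
        · rw [if_neg h2, if_neg (by omega)]
    · show (_ : Ext σ) * _ = _
      rw [dif_neg ht, one_mul, ih]
      have := p0.isLt
      by_cases h2 : p0.val < t
      · rw [if_pos h2, if_pos (by omega)]
      · omega

lemma seqDn_ones : ∀ k, seqDn σ (fun _ => (1 : Ext σ)) k = 1 := by
  intro k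
  induction k with
  | zero => rfl
  | succ k ih =>
    show (_ : Ext σ) * seqDn σ _ k = 1
    rw [ih, mul_one]
    split <;> rfl

lemma sect_one : sect σ 1 = 1 := by
  unfold sect
  have h1 : ∀ j : Fin n, blk σ (1 : G n) j = 1 := by
    intro k
    unfold blk Bblk
    rw [uc_one, zpow_zero, mul_one]
    have h2 : ∀ j : Fin n, BB σ j k ^ (vc (1 : G n) j k) = (1 : Ext σ) := fun j => by
      rw [vc_one, zpow_zero]
    rw [seqUp_congr σ h2 n, seqUp_ones σ n]
  rw [seqDn_congr_below σ n (fun j _ => h1 j), seqDn_ones σ n]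

lemma blk_uEg (m : Fin n) (c : ℤ) (k : Fin n) :
    blk σ ((uE m : G n) ^ c) k = if k = m then AA σ m ^ c else 1 := by
  unfold blk Bblk
  have h1 : ∀ j : Fin n, BB σ j k ^ (vc ((uE m : G n) ^ c) j k) = (1 : Ext σ) := fun j => by
    rw [vc_uE_zpow, zpow_zero]
  rw [seqUp_congr σ h1 n, seqUp_ones σ n, one_mul, uc_uE_zpow]
  by_cases h : k = m
  · rw [if_pos h, if_pos h, h]
  · rw [if_neg h, if_neg h, zpow_zero]

lemma sect_uE (m : Fin n) (c : ℤ) : sect σ ((uE m : G n) ^ c) = AA σ m ^ c := by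
  unfold sect
  rw [seqDn_single σ (blk σ ((uE m : G n) ^ c)) m (AA σ m ^ c) (blk_uEg σ m c) n,
    if_pos m.isLt]

lemma blk_vEg {p q : Fin n} (hpq : p < q) (w : ℤ) (k : Fin n) :
    blk σ ((vE p q : G n) ^ w) k = if k = q then BB σ p q ^ w else 1 := by
  unfold blk Bblk
  rw [uc_vE_zpow, zpow_zero, mul_one]
  by_cases hk : k = q
  · rw [if_pos hk, hk]
    have h1 : ∀ j : Fin n, BB σ j q ^ (vc ((vE p q : G n) ^ w) j q) =
        (if j = p then BB σ j q ^ w else 1) := by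
      intro j
      by_cases hj : j < q
      · rw [vc_vE_zpow _ _ _ hj]
        by_cases hjp : j = p
        · rw [if_pos (show ((j, q) : Fin n × Fin n) = (p, q) from by rw [hjp]), if_pos hjp]
        · rw [if_neg (fun hc => hjp (congrArg Prod.fst hc)), if_neg hjp, zpow_zero]
      · rw [vc_of_not_lt _ hj, zpow_zero,
          if_neg (fun hc => hj (by rw [hc]; exact hpq))]
    rw [seqUp_congr σ h1 n]
    have h3 := seqUp_single σ (fun j => BB σ j q ^ w) p n
    rw [h3, if_pos p.isLt]
  · rw [if_neg hk]
    have h1 : ∀ j : Fin n, BB σ j k ^ (vc ((vE p q : G n) ^ w) j k) = (1 : Ext σ) := by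
      intro j
      by_cases hj : j < k
      · rw [vc_vE_zpow _ _ _ hj, if_neg (fun hc => hk (congrArg Prod.snd hc)), zpow_zero]
      · rw [vc_of_not_lt _ hj, zpow_zero]
    rw [seqUp_congr σ h1 n, seqUp_ones σ n]

lemma sect_vE {p q : Fin n} (hpq : p < q) (w : ℤ) :
    sect σ ((vE p q : G n) ^ w) = BB σ p q ^ w := by
  unfold sect
  rw [seqDn_single σ _ q (BB σ p q ^ w) (blk_vEg σ hpq w) n, if_pos q.isLt]

/-- A measure on `G n` for the induction. -/
def meas (s : G n) : ℕ :=
  (Finset.univ.filter (fun i : Fin n => s.u i ≠ 0)).card * (Fintype.card (PairIdx n) + 1) +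
  (Finset.univ.filter (fun x : PairIdx n => s.v x ≠ 0)).card

lemma meas_eq_zero {s : G n} (h : meas s = 0) : s = 1 := by
  unfold meas at h
  obtain ⟨hA, hB⟩ := Nat.add_eq_zero.mp h
  have hA0 : (Finset.univ.filter (fun i : Fin n => s.u i ≠ 0)) = ∅ := by
    rcases Nat.mul_eq_zero.mp hA with h' | h'
    · exact Finset.card_eq_zero.mp h'
    · exact absurd h' (Nat.succ_ne_zero _)
  have hB0 : (Finset.univ.filter (fun x : PairIdx n => s.v x ≠ 0)) = ∅ :=
    Finset.card_eq_zero.mp hB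
  refine G.ext ?_ ?_ <;> funext x
  · show s.u x = 0
    by_contra hx
    have hmem : x ∈ Finset.univ.filter (fun i : Fin n => s.u i ≠ 0) := by simp [hx]
    rw [hA0] at hmem
    exact absurd hmem (Finset.notMem_empty x)
  · show s.v x = 0
    by_contra hx
    have hmem : x ∈ Finset.univ.filter (fun y : PairIdx n => s.v y ≠ 0) := by simp [hx]
    rw [hB0] at hmem
    exact absurd hmem (Finset.notMem_empty x)

lemma meas_peel_u (s : G n) (m : Fin n) (hm : s.u m ≠ 0) :
    meas ((uE m : G n) ^ (-(s.u m)) * s) < meas s := by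
  set t := (uE m : G n) ^ (-(s.u m)) * s with ht
  have hu : ∀ i, t.u i = (if i = m then -(s.u m) else 0) + s.u i := by
    intro i
    rw [ht, uE_zpow]
    rfl
  have hfil : Finset.univ.filter (fun i : Fin n => t.u i ≠ 0) ⊆
      (Finset.univ.filter (fun i : Fin n => s.u i ≠ 0)).erase m := by
    intro i hi
    simp only [Finset.mem_filter, Finset.mem_univ, true_and] at hi
    rw [hu i] at hi
    by_cases him : i = m
    · subst him
      rw [if_pos rfl] at hi
      exact absurd (by ring) hi
    · rw [if_neg him, zero_add] at hi
      exact Finset.mem_erase.mpr ⟨him, by simp [hi]⟩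
  have hmem : m ∈ Finset.univ.filter (fun i : Fin n => s.u i ≠ 0) := by simp [hm]
  have hcard1 : (Finset.univ.filter (fun i : Fin n => t.u i ≠ 0)).card + 1 ≤
      (Finset.univ.filter (fun i : Fin n => s.u i ≠ 0)).card := by
    have h1 := Finset.card_le_card hfil
    rw [Finset.card_erase_of_mem hmem] at h1
    have h2 := Finset.card_pos.mpr ⟨m, hmem⟩
    omega
  have hv : (Finset.univ.filter (fun x : PairIdx n => t.v x ≠ 0)).card ≤
      Fintype.card (PairIdx n) := by
    have := Finset.card_filter_le (Finset.univ : Finset (PairIdx n))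
      (fun x => t.v x ≠ 0)
    rwa [Finset.card_univ] at this
  unfold meas
  set M := Fintype.card (PairIdx n) with hM
  set A := (Finset.univ.filter (fun i : Fin n => t.u i ≠ 0)).card with hA
  set B := (Finset.univ.filter (fun i : Fin n => s.u i ≠ 0)).card with hB
  obtain ⟨B', hB'⟩ : ∃ B', B = B' + 1 := ⟨B - 1, by omega⟩
  rw [hB']
  have key : A * (M + 1) ≤ B' * (M + 1) := Nat.mul_le_mul_right (M + 1) (by omega)
  have expand : (B' + 1) * (M + 1) = B' * (M + 1) + (M + 1) := by ring
  rw [expand]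
  have := hv
  linarith

lemma meas_peel_v (s : G n) (h0 : ∀ i, s.u i = 0) (x0 : PairIdx n) (hx : s.v x0 ≠ 0) :
    meas ((vE x0.1.1 x0.1.2 : G n) ^ (-(s.v x0)) * s) < meas s := by
  set t := (vE x0.1.1 x0.1.2 : G n) ^ (-(s.v x0)) * s with ht
  have hu : ∀ i, t.u i = 0 + s.u i := by
    intro i
    rw [ht, vE_zpow]
    rfl
  have hvv : ∀ x : PairIdx n, t.v x =
      (if x.1 = (x0.1.1, x0.1.2) then -(s.v x0) else 0) + s.v x +
        0 * s.u x.1.2 := by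
    intro x
    rw [ht, vE_zpow]
    rfl
  have hAs : (Finset.univ.filter (fun i : Fin n => s.u i ≠ 0)) = ∅ := by
    refine Finset.filter_eq_empty_iff.mpr (fun i _ => ?_)
    simp [h0 i]
  have hAt : (Finset.univ.filter (fun i : Fin n => t.u i ≠ 0)) = ∅ := by
    refine Finset.filter_eq_empty_iff.mpr (fun i _ => ?_)
    simp [hu i, h0 i]
  have hfil : Finset.univ.filter (fun x : PairIdx n => t.v x ≠ 0) ⊆
      (Finset.univ.filter (fun x : PairIdx n => s.v x ≠ 0)).erase x0 := by
    intro x hxm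
    simp only [Finset.mem_filter, Finset.mem_univ, true_and] at hxm
    rw [hvv x] at hxm
    by_cases hxx : x = x0
    · subst hxx
      rw [if_pos rfl] at hxm
      exact absurd (by ring) hxm
    · rw [if_neg (fun hc => hxx (Subtype.ext hc)), zero_add] at hxm
      refine Finset.mem_erase.mpr ⟨hxx, by simp; intro hc; rw [hc] at hxm; simp at hxm⟩
  have hmem : x0 ∈ Finset.univ.filter (fun x : PairIdx n => s.v x ≠ 0) := by simp [hx]
  have hcard : (Finset.univ.filter (fun x : PairIdx n => t.v x ≠ 0)).card + 1 ≤
      (Finset.univ.filter (fun x : PairIdx n => s.v x ≠ 0)).card := by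
    have h1 := Finset.card_le_card hfil
    rw [Finset.card_erase_of_mem hmem] at h1
    have h2 := Finset.card_pos.mpr ⟨x0, hmem⟩
    omega
  unfold meas
  rw [hAs, hAt, Finset.card_empty, zero_mul, zero_add, zero_add]
  omega

lemma main_aux : ∀ N, ∀ s : G n, meas s ≤ N → ∀ r,
    sect σ r * sect σ s = ec σ (sigmaLam (lamE σ) r s) * sect σ (r * s) := by
  intro N
  induction N with
  | zero =>
    intro s hm r
    have hs1 : s = 1 := meas_eq_zero (Nat.le_zero.mp hm)
    subst hs1
    rw [sect_one σ, mul_one, mul_one, sigmaLam_one_right, ec_one, one_mul]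
  | succ N ih =>
    intro s hm r
    by_cases hucase : ∃ m, s.u m ≠ 0
    · obtain ⟨m, hm0⟩ := hucase
      have hpeel := meas_peel_u s m hm0
      set c := s.u m with hcdef
      set t := (uE m : G n) ^ (-c) * s with htdef
      have hmt : meas t ≤ N := by omega
      have hst : (uE m : G n) ^ c * t = s := by rw [htdef]; group
      have e1 := ih t hmt ((uE m : G n) ^ c)
      rw [hst, sect_uE σ m c] at e1
      have e2 : sect σ r * AA σ m ^ c = ec σ (sigmaLam (lamE σ) r ((uE m : G n) ^ c)) *
          sect σ (r * (uE m : G n) ^ c) := by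
        rw [sigmaLam_uE σ r m c]
        exact absorbU_full σ m c r
      have e3 := ih t hmt (r * (uE m : G n) ^ c)
      have hco := sigmaLam_cocycle (lamE σ) r ((uE m : G n) ^ c) t
      rw [hst] at hco
      have hsect_s : sect σ s = (ec σ (sigmaLam (lamE σ) ((uE m : G n) ^ c) t))⁻¹ *
          (AA σ m ^ c * sect σ t) := by
        rw [e1, inv_mul_cancel_left]
      rw [hsect_s]
      calc sect σ r * ((ec σ (sigmaLam (lamE σ) ((uE m : G n) ^ c) t))⁻¹ *
            (AA σ m ^ c * sect σ t))
          = ec σ (sigmaLam (lamE σ) ((uE m : G n) ^ c) t)⁻¹ *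
            ((sect σ r * AA σ m ^ c) * sect σ t) := by
            rw [← map_inv, ec_pull]
            simp only [mul_assoc]
        _ = ec σ (sigmaLam (lamE σ) ((uE m : G n) ^ c) t)⁻¹ *
            (ec σ (sigmaLam (lamE σ) r ((uE m : G n) ^ c)) *
              (sect σ (r * (uE m : G n) ^ c) * sect σ t)) := by
            rw [e2]
            simp only [mul_assoc]
        _ = ec σ (sigmaLam (lamE σ) ((uE m : G n) ^ c) t)⁻¹ *
            (ec σ (sigmaLam (lamE σ) r ((uE m : G n) ^ c)) *
              (ec σ (sigmaLam (lamE σ) (r * (uE m : G n) ^ c) t) *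
                sect σ (r * (uE m : G n) ^ c * t))) := by
            rw [e3]
        _ = ec σ ((sigmaLam (lamE σ) ((uE m : G n) ^ c) t)⁻¹ *
              (sigmaLam (lamE σ) r ((uE m : G n) ^ c) *
               sigmaLam (lamE σ) (r * (uE m : G n) ^ c) t)) *
              sect σ (r * (uE m : G n) ^ c * t) := by
            rw [ec_ec, ec_ec, mul_assoc]
        _ = ec σ (sigmaLam (lamE σ) r s) * sect σ (r * s) := by
            rw [mul_assoc r ((uE m : G n) ^ c) t, hst, hco,
              mul_comm (sigmaLam (lamE σ) r s), inv_mul_cancel_left]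
    · push_neg at hucase
      by_cases hvcase : ∃ x : PairIdx n, s.v x ≠ 0
      · obtain ⟨x0, hx0⟩ := hvcase
        have hpq : x0.1.1 < x0.1.2 := x0.2
        have hpeel := meas_peel_v s hucase x0 hx0
        set w := s.v x0 with hwdef
        set t := (vE x0.1.1 x0.1.2 : G n) ^ (-w) * s with htdef
        have hmt : meas t ≤ N := by omega
        have hst : (vE x0.1.1 x0.1.2 : G n) ^ w * t = s := by rw [htdef]; group
        have e1 := ih t hmt ((vE x0.1.1 x0.1.2 : G n) ^ w)
        rw [hst, sect_vE σ hpq w] at e1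
        have e2 : sect σ r * BB σ x0.1.1 x0.1.2 ^ w =
            ec σ (sigmaLam (lamE σ) r ((vE x0.1.1 x0.1.2 : G n) ^ w)) *
            sect σ (r * (vE x0.1.1 x0.1.2 : G n) ^ w) := by
          rw [sigmaLam_vE σ r hpq w]
          exact absorbV_full σ x0.1.1 x0.1.2 hpq w r
        have e3 := ih t hmt (r * (vE x0.1.1 x0.1.2 : G n) ^ w)
        have hco := sigmaLam_cocycle (lamE σ) r ((vE x0.1.1 x0.1.2 : G n) ^ w) t
        rw [hst] at hco
        have hsect_s : sect σ s =
            (ec σ (sigmaLam (lamE σ) ((vE x0.1.1 x0.1.2 : G n) ^ w) t))⁻¹ *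
            (BB σ x0.1.1 x0.1.2 ^ w * sect σ t) := by
          rw [e1, inv_mul_cancel_left]
        rw [hsect_s]
        calc sect σ r * ((ec σ (sigmaLam (lamE σ) ((vE x0.1.1 x0.1.2 : G n) ^ w) t))⁻¹ *
              (BB σ x0.1.1 x0.1.2 ^ w * sect σ t))
            = ec σ (sigmaLam (lamE σ) ((vE x0.1.1 x0.1.2 : G n) ^ w) t)⁻¹ *
              ((sect σ r * BB σ x0.1.1 x0.1.2 ^ w) * sect σ t) := by
              rw [← map_inv, ec_pull]
              simp only [mul_assoc]
          _ = ec σ (sigmaLam (lamE σ) ((vE x0.1.1 x0.1.2 : G n) ^ w) t)⁻¹ *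
              (ec σ (sigmaLam (lamE σ) r ((vE x0.1.1 x0.1.2 : G n) ^ w)) *
                (sect σ (r * (vE x0.1.1 x0.1.2 : G n) ^ w) * sect σ t)) := by
              rw [e2]
              simp only [mul_assoc]
          _ = ec σ (sigmaLam (lamE σ) ((vE x0.1.1 x0.1.2 : G n) ^ w) t)⁻¹ *
              (ec σ (sigmaLam (lamE σ) r ((vE x0.1.1 x0.1.2 : G n) ^ w)) *
                (ec σ (sigmaLam (lamE σ) (r * (vE x0.1.1 x0.1.2 : G n) ^ w) t) *
                  sect σ (r * (vE x0.1.1 x0.1.2 : G n) ^ w * t))) := by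
              rw [e3]
          _ = ec σ ((sigmaLam (lamE σ) ((vE x0.1.1 x0.1.2 : G n) ^ w) t)⁻¹ *
                (sigmaLam (lamE σ) r ((vE x0.1.1 x0.1.2 : G n) ^ w) *
                 sigmaLam (lamE σ) (r * (vE x0.1.1 x0.1.2 : G n) ^ w) t)) *
                sect σ (r * (vE x0.1.1 x0.1.2 : G n) ^ w * t) := by
              rw [ec_ec, ec_ec, mul_assoc]
          _ = ec σ (sigmaLam (lamE σ) r s) * sect σ (r * s) := by
              rw [mul_assoc r ((vE x0.1.1 x0.1.2 : G n) ^ w) t, hst, hco,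
                mul_comm (sigmaLam (lamE σ) r s), inv_mul_cancel_left]
      · push_neg at hvcase
        have hs1 : s = 1 := G.ext (funext hucase) (funext hvcase)
        subst hs1
        rw [sect_one σ, mul_one, mul_one, sigmaLam_one_right, ec_one, one_mul]

lemma main (r s : G n) :
    sect σ r * sect σ s = ec σ (sigmaLam (lamE σ) r s) * sect σ (r * s) :=
  main_aux σ (meas s) s le_rfl r

end MainSec

/-- every multiplier of `G(n)` is similar to `σ_λ` for some family
of parameters `λ`. -/
theorem every_multiplier_similar_to_sigmaLam (n : ℕ) (hn : 2 ≤ n)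
    (σ : G n → G n → Circle) (hσ : IsMultiplier σ) :
    ∃ (lam : Fin n → Fin n → Fin n → Circle) (β : G n → Circle),
      ∀ r s : G n, sigmaLam lam r s = β r * β s * (β (r * s))⁻¹ * σ r s := by
  haveI : MulT σ := ⟨hσ⟩
  refine ⟨lamE σ, fun r => (sect σ r).c, fun r s => ?_⟩
  have h := main σ r s
  have hc := congrArg Ext.c h
  rw [emul_c, emul_c, sect_g, sect_g, ec_c, ec_g, sect_g, sig_one_left σ, mul_one] at hc
  have key := eq_mul_inv_of_mul_eq hc.symm
  rw [key]
  simp only [mul_comm, mul_left_comm, mul_assoc]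

end FreeNilp
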